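/- arXiv:1802.07112 — 6 statements merged into one kernel-verified Lean document; each statement's English description precedes it below -/
import Mathlib

section
/- For every n ≥ 0, Σ_{j=0}^{n} m(j)·φ(n−j) = (2n+1)·φ(n), i.e. Σ_{j=0}^{n} m(j)·(2(n−j)−1)!! = (2n+1)!!. -/
/-- `φ(n) = (2n−1)!! = (2n)!/(2^n·n!)` (the division is exact). -/
def phi (n : ℕ) : ℕ := (2 * n).factorial / (2 ^ n * n.factorial)

lemma phi_zero : phi 0 = 1 := by simp [phi]

lemma pow_mul_factorial_dvd (n : ℕ) : 2 ^ n * n.factorial ∣ (2 * n).factorial := by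
  induction n with
  | zero => simp
  | succ n ih =>
    obtain ⟨c, hc⟩ := ih
    refine ⟨(2 * n + 1) * c, ?_⟩
    have h : 2 * (n + 1) = 2 * n + 1 + 1 := by ring
    rw [h, Nat.factorial_succ, Nat.factorial_succ, Nat.factorial_succ, hc, pow_succ]
    ring

lemma phi_succ (n : ℕ) : phi (n + 1) = (2 * n + 1) * phi n := by
  have hd := pow_mul_factorial_dvd n
  have h1 : (2 * (n + 1)).factorial = (2 * (n + 1)) * ((2 * n + 1) * (2 * n).factorial) := by
    have h2 : 2 * (n + 1) = 2 * n + 1 + 1 := by ring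
    rw [h2, Nat.factorial_succ, Nat.factorial_succ]
  have h3 : 2 ^ (n + 1) * (n + 1).factorial = (2 * (n + 1)) * (2 ^ n * n.factorial) := by
    rw [Nat.factorial_succ, pow_succ]; ring
  rw [phi, phi, h1, h3, Nat.mul_div_mul_left _ _ (by positivity), Nat.mul_div_assoc _ hd]

open Finset in
/-- For every `n ≥ 0`, `Σ_{j=0}^{n} m(j)·φ(n−j) = (2n+1)·φ(n)`. -/
theorem maps_convolution_double_factorial
    (m : ℕ → ℕ) (hm0 : m 0 = 1)
    (hm : ∀ n : ℕ, m (n + 1) =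
      (∑ k ∈ Finset.range (n + 1), m k * m (n - k)) + (2 * (n + 1) - 1) * m n) :
    ∀ n : ℕ, (∑ j ∈ Finset.range (n + 1), m j * phi (n - j)) = (2 * n + 1) * phi n := by
  have phz : ∀ k : ℕ, ((phi (k + 1) : ℤ)) = (2 * k + 1) * phi k := by
    intro k; exact_mod_cast phi_succ k
  have hmz : ∀ s : ℕ, (m (s + 1) : ℤ)
      = (∑ k ∈ range (s + 1), (m k : ℤ) * m (s - k)) + (2 * s + 1) * m s := by
    intro s
    have h := hm s
    have h2 : 2 * (s + 1) - 1 = 2 * s + 1 := by omega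
    rw [h2] at h
    exact_mod_cast h
  have key : ∀ n : ℕ,
      ((∑ j ∈ range (n + 1), m j * phi (n - j)) = (2 * n + 1) * phi n) ∧
      (m (n + 1) = 2 * ∑ j ∈ range (n + 1), (j + 1) * m j * phi (n - j)) := by
    intro n
    induction n using Nat.strong_induction_on with
    | _ n ih =>
      match n with
      | 0 =>
        constructor
        · simp [phi_zero, hm0]
        · have h := hm 0
          simp [hm0, phi_zero] at h ⊢
          omega
      | (n + 1) =>
        have ihP : (∑ j ∈ range (n + 1), m j * phi (n - j)) = (2 * n + 1) * phi n :=
          (ih n (by omega)).1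
        have ihQ : m (n + 1) = 2 * ∑ j ∈ range (n + 1), (j + 1) * m j * phi (n - j) :=
          (ih n (by omega)).2
        have ihQz : ∀ t : ℕ, t ≤ n →
            (m (t + 1) : ℤ) = 2 * ∑ i ∈ range (t + 1), ((i : ℤ) + 1) * m i * phi (t - i) := by
          intro t ht
          exact_mod_cast (ih t (by omega)).2
        have ihPz : (∑ j ∈ range (n + 1), (m j : ℤ) * phi (n - j)) = (2 * n + 1) * phi n := by
          exact_mod_cast ihP
        set D : ℤ := ∑ j ∈ range (n + 1), ((j : ℤ) + 1) * m j * phi (n + 1 - j) with hD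
        set E : ℤ := ∑ s ∈ range (n + 1), ((s : ℤ) + 2) * (2 * s + 1) * phi (n - s) * m s with hE
        -- Step F : D + E = (n+2)·m(n+1) − φ(n+1)
        have stepF : D + E = ((n : ℤ) + 2) * m (n + 1) - phi (n + 1) := by
          have hDE : D + E = ∑ j ∈ range (n + 1),
              (2 * ((n : ℤ) + 2)) * (((j : ℤ) + 1) * m j * phi (n - j))
              - ∑ j ∈ range (n + 1), (m j : ℤ) * phi (n - j) := by
            rw [hD, hE, ← Finset.sum_add_distrib, ← Finset.sum_sub_distrib]
            refine Finset.sum_congr rfl ?_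
            intro j hj
            have hj' : j ≤ n := Nat.lt_succ_iff.mp (mem_range.mp hj)
            have h1 : n + 1 - j = (n - j) + 1 := by omega
            rw [h1, phz (n - j)]
            have h2 : ((n - j : ℕ) : ℤ) = (n : ℤ) - j := by omega
            rw [h2]
            ring
          rw [hDE, ← Finset.mul_sum, ihPz, phz n, ihQz n le_rfl]
          ring
        -- convolution rewriting
        have hconv1 : (∑ k ∈ range (n + 1), (m k : ℤ) * m (n + 1 - k))
            = ∑ s ∈ range (n + 1), ((s : ℤ) + 2) * phi (n - s)
                * (∑ k ∈ range (s + 1), (m k : ℤ) * m (s - k)) := by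
          calc (∑ k ∈ range (n + 1), (m k : ℤ) * m (n + 1 - k))
              = ∑ k ∈ range (n + 1), ∑ i ∈ range (n + 1 - k),
                  2 * ((m k : ℤ) * (((i : ℤ) + 1) * m i * phi (n - k - i))) := by
                refine Finset.sum_congr rfl ?_
                intro k hk
                have hk' : k ≤ n := Nat.lt_succ_iff.mp (mem_range.mp hk)
                have h1 : n + 1 - k = (n - k) + 1 := by omega
                rw [h1, ihQz (n - k) (by omega), Finset.mul_sum, Finset.mul_sum]
                exact Finset.sum_congr rfl fun i _ => by ring
            _ = ∑ s ∈ range (n + 1), ∑ k ∈ range (s + 1),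
                  2 * ((m k : ℤ) * ((((s - k : ℕ) : ℤ) + 1) * m (s - k) * phi (n - k - (s - k)))) :=
                (Finset.sum_range_diag_flip (n + 1)
                  (fun k i => 2 * ((m k : ℤ) * (((i : ℤ) + 1) * m i * phi (n - k - i))))).symm
            _ = ∑ s ∈ range (n + 1), ((s : ℤ) + 2) * phi (n - s)
                  * (∑ k ∈ range (s + 1), (m k : ℤ) * m (s - k)) := by
                refine Finset.sum_congr rfl ?_
                intro s hs
                have hs' : s ≤ n := Nat.lt_succ_iff.mp (mem_range.mp hs)
                have hrefl : (∑ k ∈ range (s + 1), (((s - k : ℕ) : ℤ) + 1) * ((m k : ℤ) * m (s - k)))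
                    = ∑ k ∈ range (s + 1), ((k : ℤ) + 1) * ((m k : ℤ) * m (s - k)) := by
                  rw [← Finset.sum_range_reflect
                    (fun k => ((k : ℤ) + 1) * ((m k : ℤ) * m (s - k))) (s + 1)]
                  refine Finset.sum_congr rfl ?_
                  intro k hk
                  have hk' : k ≤ s := Nat.lt_succ_iff.mp (mem_range.mp hk)
                  have h1 : s + 1 - 1 - k = s - k := by omega
                  have h2 : s - (s - k) = k := by omega
                  rw [h1, h2]
                  ring
                have step1 : (∑ k ∈ range (s + 1),
                      2 * ((m k : ℤ) * ((((s - k : ℕ) : ℤ) + 1) * m (s - k) * phi (n - k - (s - k)))))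
                    = (phi (n - s) : ℤ) * ∑ k ∈ range (s + 1),
                        2 * ((((s - k : ℕ) : ℤ) + 1) * ((m k : ℤ) * m (s - k))) := by
                  rw [Finset.mul_sum]
                  refine Finset.sum_congr rfl ?_
                  intro k hk
                  have hk' : k ≤ s := Nat.lt_succ_iff.mp (mem_range.mp hk)
                  have h1 : n - k - (s - k) = n - s := by omega
                  rw [h1]
                  ring
                have step2 : (∑ k ∈ range (s + 1),
                      2 * ((((s - k : ℕ) : ℤ) + 1) * ((m k : ℤ) * m (s - k))))
                    = ((s : ℤ) + 2) * ∑ k ∈ range (s + 1), (m k : ℤ) * m (s - k) := by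
                  have e1 : (∑ k ∈ range (s + 1),
                        2 * ((((s - k : ℕ) : ℤ) + 1) * ((m k : ℤ) * m (s - k))))
                      = (∑ k ∈ range (s + 1), (((s - k : ℕ) : ℤ) + 1) * ((m k : ℤ) * m (s - k)))
                        + ∑ k ∈ range (s + 1), (((s - k : ℕ) : ℤ) + 1) * ((m k : ℤ) * m (s - k)) := by
                    rw [← Finset.sum_add_distrib]
                    exact Finset.sum_congr rfl fun k _ => by ring
                  rw [e1]
                  nth_rewrite 2 [hrefl]
                  rw [← Finset.sum_add_distrib, Finset.mul_sum]
                  refine Finset.sum_congr rfl ?_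
                  intro k hk
                  have hk' : k ≤ s := Nat.lt_succ_iff.mp (mem_range.mp hk)
                  have h2 : ((s - k : ℕ) : ℤ) = (s : ℤ) - k := by omega
                  rw [h2]
                  ring
                rw [step1, step2]
                ring
        have hconv : (∑ k ∈ range (n + 1), (m k : ℤ) * m (n + 1 - k))
            = ∑ s ∈ range (n + 1), ((s : ℤ) + 2) * phi (n - s)
                * ((m (s + 1) : ℤ) - (2 * s + 1) * m s) := by
          rw [hconv1]
          refine Finset.sum_congr rfl fun s _ => ?_
          have h := hmz s
          have h2 : (∑ k ∈ range (s + 1), (m k : ℤ) * m (s - k))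
              = (m (s + 1) : ℤ) - (2 * s + 1) * m s := by linarith
          rw [h2]
        -- reindex the first part of the split sum
        have hE1 : (∑ s ∈ range (n + 1), ((s : ℤ) + 2) * phi (n - s) * (m (s + 1) : ℤ))
            = D + ((n : ℤ) + 2) * m (n + 1) - phi (n + 1) := by
          have h1 : (∑ j ∈ range (n + 2), ((j : ℤ) + 1) * m j * phi (n + 1 - j))
              = (∑ s ∈ range (n + 1), ((s : ℤ) + 2) * phi (n - s) * (m (s + 1) : ℤ))
                + (1 : ℤ) * m 0 * phi (n + 1) := by
            rw [Finset.sum_range_succ' (fun j => ((j : ℤ) + 1) * m j * phi (n + 1 - j)) (n + 1)]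
            congr 1
            · refine Finset.sum_congr rfl fun s _ => ?_
              have h2 : n + 1 - (s + 1) = n - s := by omega
              rw [h2]
              push_cast
              ring
          have h3 : (∑ j ∈ range (n + 2), ((j : ℤ) + 1) * m j * phi (n + 1 - j))
              = D + (((n : ℤ) + 1) + 1) * m (n + 1) * phi (n + 1 - (n + 1)) := by
            rw [Finset.sum_range_succ, hD]
            push_cast
            ring
          have h4 : n + 1 - (n + 1) = 0 := by omega
          rw [h4, phi_zero] at h3
          rw [hm0] at h1
          push_cast at h1 h3
          linarith
        -- split the convolution sum
        have hsplit : (∑ s ∈ range (n + 1), ((s : ℤ) + 2) * phi (n - s)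
              * ((m (s + 1) : ℤ) - (2 * s + 1) * m s))
            = (∑ s ∈ range (n + 1), ((s : ℤ) + 2) * phi (n - s) * (m (s + 1) : ℤ)) - E := by
          rw [hE, ← Finset.sum_sub_distrib]
          exact Finset.sum_congr rfl fun s _ => by ring
        -- Q at level n+1
        have hQ : m (n + 1 + 1) = 2 * ∑ j ∈ range (n + 1 + 1), (j + 1) * m j * phi (n + 1 - j) := by
          have hm2 := hmz (n + 1)
          rw [Finset.sum_range_succ] at hm2
          have h0 : n + 1 - (n + 1) = 0 := by omega
          rw [h0, hm0] at hm2
          rw [hconv, hsplit, hE1] at hm2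
          have hsum2 : (∑ j ∈ range (n + 2), ((j : ℤ) + 1) * m j * phi (n + 1 - j))
              = D + ((n : ℤ) + 2) * m (n + 1) := by
            rw [Finset.sum_range_succ, hD, h0, phi_zero]
            push_cast
            ring
          have goalz : (m (n + 1 + 1) : ℤ)
              = 2 * ∑ j ∈ range (n + 1 + 1), ((j : ℤ) + 1) * m j * phi (n + 1 - j) := by
            rw [show n + 1 + 1 = n + 2 from rfl, hsum2]
            push_cast at hm2
            linarith [stepF]
          exact_mod_cast goalz
        refine ⟨?_, hQ⟩
        -- P at level n+1
        rw [Finset.sum_range_succ, show n + 1 - (n + 1) = 0 from by omega, phi_zero, mul_one,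
          ihQ]
        have h1 : (∑ j ∈ range (n + 1), m j * phi (n + 1 - j))
              + 2 * ∑ j ∈ range (n + 1), (j + 1) * m j * phi (n - j)
            = ∑ j ∈ range (n + 1), (2 * n + 3) * (m j * phi (n - j)) := by
          rw [Finset.mul_sum, ← Finset.sum_add_distrib]
          refine Finset.sum_congr rfl ?_
          intro j hj
          have hj' : j ≤ n := Nat.lt_succ_iff.mp (mem_range.mp hj)
          have h2 : n + 1 - j = (n - j) + 1 := by omega
          rw [h2, phi_succ (n - j)]
          have h3 : 2 * (n - j) + 1 + 2 * (j + 1) = 2 * n + 3 := by omega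
          calc m j * ((2 * (n - j) + 1) * phi (n - j)) + 2 * ((j + 1) * m j * phi (n - j))
              = (2 * (n - j) + 1 + 2 * (j + 1)) * (m j * phi (n - j)) := by ring
            _ = (2 * n + 3) * (m j * phi (n - j)) := by rw [h3]
        rw [h1, ← Finset.mul_sum, ihP, phi_succ n]
        ring
  exact fun n => (key n).1
end

section
/- There exists a constant C > 0 such that for all n ≥ 1, |m(n)/φ(n) − (2n−1)| ≤ C/n; in particular m(n)/φ(n) = 2n − 1 + O(1/n) as n → ∞. -/
lemma phi_eq (n : ℕ) : phi (n + 1) = (2 * n + 1).doubleFactorial := by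
  have h : (2 * (n + 1)).factorial
      = (2 ^ (n + 1) * (n + 1).factorial) * (2 * n + 1).doubleFactorial := by
    have h2 : 2 * (n + 1) = (2 * n + 1) + 1 := by ring
    rw [h2, Nat.factorial_eq_mul_doubleFactorial]
    have h3 : (2 * n + 1 + 1) = 2 * (n + 1) := by ring
    rw [h3, Nat.doubleFactorial_two_mul]
  have hpos : 0 < 2 ^ (n + 1) * (n + 1).factorial :=
    Nat.mul_pos (Nat.pow_pos (by norm_num)) (Nat.factorial_pos _)
  rw [phi, h, Nat.mul_div_cancel_left _ hpos]

lemma phi_pos (n : ℕ) : 0 < phi n := by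
  induction n with
  | zero => decide
  | succ k ih => rw [phi_succ]; positivity


lemma swap_tri (f : ℕ → ℕ → ℤ) (n : ℕ) :
    ∑ k ∈ Finset.range n, ∑ j ∈ Finset.range (n - k), f k j
      = ∑ s ∈ Finset.range n, ∑ k ∈ Finset.range (s + 1), f k (s - k) := by
  induction n with
  | zero => simp
  | succ n ih =>
    rw [Finset.sum_range_succ (fun s => ∑ k ∈ Finset.range (s + 1), f k (s - k)), ← ih]
    rw [Finset.sum_range_succ (fun k => ∑ j ∈ Finset.range (n + 1 - k), f k j)]
    have h1 : ∀ k ∈ Finset.range n, (∑ j ∈ Finset.range (n + 1 - k), f k j)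
        = (∑ j ∈ Finset.range (n - k), f k j) + f k (n - k) := by
      intro k hk
      have hk' : n + 1 - k = (n - k) + 1 := by
        simp only [Finset.mem_range] at hk; omega
      rw [hk', Finset.sum_range_succ]
    rw [Finset.sum_congr rfl h1, Finset.sum_add_distrib]
    have h2 : n + 1 - n = 1 := by omega
    rw [h2, Finset.sum_range_one, Finset.sum_range_succ (fun k => f k (n - k))]
    simp only [Nat.sub_self]
    ring

open Finset in
lemma main_identity (m : ℕ → ℕ) (hm0 : m 0 = 1)
    (hm : ∀ n : ℕ, m (n + 1) =
      (∑ k ∈ Finset.range (n + 1), m k * m (n - k)) + (2 * (n + 1) - 1) * m n) :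
    ∀ n : ℕ,
      (∑ k ∈ Finset.range (n + 1), (m k : ℤ) * phi (n - k) = phi (n + 1)) ∧
      (2 * ∑ k ∈ Finset.range (n + 1), ((k : ℤ) + 1) * m k * phi (n - k) = m (n + 1)) := by
  have hmz : ∀ t : ℕ, (m (t + 1) : ℤ) =
      (∑ k ∈ Finset.range (t + 1), (m k : ℤ) * m (t - k)) + (2 * t + 1) * m t := by
    intro t
    have h := hm t
    have h2 : 2 * (t + 1) - 1 = 2 * t + 1 := by omega
    rw [h2] at h
    exact_mod_cast congrArg (Nat.cast : ℕ → ℤ) h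
  intro n
  induction n using Nat.strong_induction_on with
  | _ n IH =>
  cases n with
  | zero =>
    constructor
    · simp [hm0, phi_zero, phi_succ 0]
    · have h1 := hmz 0
      simp [hm0, phi_zero] at h1 ⊢
      omega
  | succ n' =>
    have IHI : ∑ k ∈ range (n' + 1), (m k : ℤ) * phi (n' - k) = phi (n' + 1) :=
      (IH n' (by omega)).1
    have IHK : ∀ j, j < n' + 1 →
        2 * ∑ k ∈ Finset.range (j + 1), ((k : ℤ) + 1) * m k * phi (j - k) = m (j + 1) :=
      fun j hj => (IH j hj).2
    -- ===== key convolution identity =====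
    have key : (∑ k ∈ range (n' + 2), (m k : ℤ) * m (n' + 1 - k))
        = (m (n' + 1) : ℤ) + ∑ s ∈ range (n' + 1),
            ((s : ℤ) + 2) * phi (n' - s) * ((m (s + 1) : ℤ) - (2 * s + 1) * m s) := by
      rw [Finset.sum_range_succ]
      simp only [Nat.sub_self, hm0, Nat.cast_one, mul_one]
      rw [add_comm]
      congr 1
      have hb : ∀ k ∈ range (n' + 1), (m k : ℤ) * m (n' + 1 - k)
          = ∑ j ∈ range (n' + 1 - k),
              2 * ((j : ℤ) + 1) * ((m k : ℤ) * m j) * (phi (n' - k - j) : ℤ) := by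
        intro k hk
        simp only [Finset.mem_range] at hk
        have h1 : n' + 1 - k = (n' - k) + 1 := by omega
        have h2 := IHK (n' - k) (by omega)
        rw [h1, ← h2, Finset.mul_sum, Finset.mul_sum]
        apply Finset.sum_congr rfl
        intro j hj
        ring
      calc ∑ k ∈ range (n' + 1), (m k : ℤ) * m (n' + 1 - k)
          = ∑ k ∈ range (n' + 1), ∑ j ∈ range (n' + 1 - k),
              2 * ((j : ℤ) + 1) * ((m k : ℤ) * m j) * (phi (n' - k - j) : ℤ) :=
            Finset.sum_congr rfl hb
        _ = ∑ s ∈ range (n' + 1), ∑ k ∈ range (s + 1),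
              2 * (((s - k : ℕ) : ℤ) + 1) * ((m k : ℤ) * m (s - k))
                * (phi (n' - k - (s - k)) : ℤ) :=
            swap_tri (fun k j => 2 * ((j : ℤ) + 1) * ((m k : ℤ) * m j)
              * (phi (n' - k - j) : ℤ)) (n' + 1)
        _ = ∑ s ∈ range (n' + 1),
              ((s : ℤ) + 2) * phi (n' - s) * ((m (s + 1) : ℤ) - (2 * s + 1) * m s) := by
            apply Finset.sum_congr rfl
            intro s hs
            simp only [Finset.mem_range] at hs
            have hcast : ∀ k ∈ range (s + 1),
                2 * (((s - k : ℕ) : ℤ) + 1) * ((m k : ℤ) * m (s - k)) * (phi (n' - k - (s - k)) : ℤ)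
                = 2 * (((s : ℤ)) - k + 1) * ((m k : ℤ) * m (s - k)) * (phi (n' - s) : ℤ) := by
              intro k hk
              simp only [Finset.mem_range] at hk
              have e1 : n' - k - (s - k) = n' - s := by omega
              have e2 : ((s - k : ℕ) : ℤ) = (s : ℤ) - k := Nat.cast_sub (by omega)
              rw [e1, e2]
            rw [Finset.sum_congr rfl hcast]
            have hA2 : (∑ k ∈ range (s + 1),
                  2 * (((s : ℤ)) - k + 1) * ((m k : ℤ) * m (s - k)) * (phi (n' - s) : ℤ))
                = ∑ k ∈ range (s + 1), 2 * ((k : ℤ) + 1) * ((m (s - k) : ℤ) * m k) * (phi (n' - s) : ℤ) := by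
              rw [← Finset.sum_range_reflect
                (fun k => 2 * ((k : ℤ) + 1) * ((m (s - k) : ℤ) * m k) * (phi (n' - s) : ℤ)) (s + 1)]
              apply Finset.sum_congr rfl
              intro j hj
              simp only [Finset.mem_range] at hj
              have e1 : s + 1 - 1 - j = s - j := by omega
              have e2 : s - (s - j) = j := by omega
              have e3 : ((s - j : ℕ) : ℤ) = (s : ℤ) - j := Nat.cast_sub (by omega)
              rw [e1, e2, e3]
            have hcs : (∑ k ∈ range (s + 1), (m k : ℤ) * m (s - k))
                = (m (s + 1) : ℤ) - (2 * s + 1) * m s := by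
              have := hmz s
              linarith
            have e4 : 2 * (∑ k ∈ range (s + 1),
                  2 * (((s : ℤ)) - k + 1) * ((m k : ℤ) * m (s - k)) * (phi (n' - s) : ℤ))
                = 2 * (((s : ℤ) + 2) * phi (n' - s) * ((m (s + 1) : ℤ) - (2 * s + 1) * m s)) := by
              rw [← hcs, two_mul]
              nth_rewrite 2 [hA2]
              rw [← Finset.sum_add_distrib]
              simp only [Finset.mul_sum]
              apply Finset.sum_congr rfl
              intro k hk
              ring
            exact mul_left_cancel₀ (by norm_num : (2:ℤ) ≠ 0) e4
    -- ===== split =====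
    have hsplit : ∑ s ∈ range (n' + 1),
          ((s : ℤ) + 2) * phi (n' - s) * ((m (s + 1) : ℤ) - (2 * s + 1) * m s)
        = (∑ s ∈ range (n' + 1), ((s : ℤ) + 2) * phi (n' - s) * m (s + 1))
          - ∑ s ∈ range (n' + 1), ((s : ℤ) + 2) * (2 * s + 1) * m s * phi (n' - s) := by
      rw [← Finset.sum_sub_distrib]
      apply Finset.sum_congr rfl
      intro s hs
      ring
    -- ===== reindex: sum with m(s+1) equals W(n'+1) minus phi term =====
    have hS1 : ∑ s ∈ range (n' + 1), ((s : ℤ) + 2) * phi (n' - s) * m (s + 1)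
        = (∑ k ∈ range (n' + 2), ((k : ℤ) + 1) * m k * phi (n' + 1 - k)) - phi (n' + 1) := by
      rw [Finset.sum_range_succ' (fun k => ((k : ℤ) + 1) * m k * (phi (n' + 1 - k) : ℤ)) (n' + 1)]
      simp only [Nat.cast_zero, zero_add, one_mul, hm0, Nat.cast_one, Nat.sub_zero,
        Nat.succ_sub_succ_eq_sub]
      rw [add_sub_cancel_right]
      apply Finset.sum_congr rfl
      intro s hs
      push_cast
      ring
    -- ===== W + Y identity =====
    have hφ : ∀ k ∈ range (n' + 1), ((k : ℤ) + 1) * m k * (phi (n' + 1 - k) : ℤ)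
        = (2 * ((n' : ℤ) - k) + 1) * (((k : ℤ) + 1) * m k * phi (n' - k)) := by
      intro k hk
      simp only [Finset.mem_range] at hk
      have h1 : n' + 1 - k = (n' - k) + 1 := by omega
      have e2 : ((n' - k : ℕ) : ℤ) = (n' : ℤ) - k := Nat.cast_sub (by omega)
      rw [h1, phi_succ (n' - k)]
      push_cast [e2]
      ring
    have hWY : (∑ k ∈ range (n' + 2), ((k : ℤ) + 1) * m k * phi (n' + 1 - k))
          + (∑ s ∈ range (n' + 1), ((s : ℤ) + 2) * (2 * s + 1) * m s * phi (n' - s))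
        = 2 * ((n' : ℤ) + 2) * m (n' + 1) - phi (n' + 1) := by
      rw [Finset.sum_range_succ]
      rw [Finset.sum_congr rfl hφ]
      have e5 : (∑ k ∈ range (n' + 1), (2 * ((n' : ℤ) - k) + 1) * (((k : ℤ) + 1) * m k * phi (n' - k)))
            + (∑ s ∈ range (n' + 1), ((s : ℤ) + 2) * (2 * s + 1) * m s * phi (n' - s))
          = 2 * ((n' : ℤ) + 2) * (∑ k ∈ range (n' + 1), ((k : ℤ) + 1) * m k * phi (n' - k))
            - ∑ k ∈ range (n' + 1), (m k : ℤ) * phi (n' - k) := by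
        rw [← Finset.sum_add_distrib, Finset.mul_sum, ← Finset.sum_sub_distrib]
        apply Finset.sum_congr rfl
        intro k hk
        ring
      have h6 : 2 * ((n' : ℤ) + 2) * (∑ k ∈ range (n' + 1), ((k : ℤ) + 1) * m k * phi (n' - k))
          = ((n' : ℤ) + 2) * m (n' + 1) := by
        rw [← IHK n' (by omega)]
        ring
      have h7 : n' + 1 - (n' + 1) = 0 := by omega
      rw [h7, phi_zero]
      push_cast
      linarith [e5, h6, IHI]
    -- ===== conclude both parts =====
    constructor
    · -- identity I at n'+1
      show ∑ k ∈ range (n' + 2), (m k : ℤ) * phi (n' + 1 - k) = (phi (n' + 2) : ℤ)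
      rw [Finset.sum_range_succ]
      have hφ' : ∀ k ∈ range (n' + 1), (m k : ℤ) * (phi (n' + 1 - k) : ℤ)
          = (2 * (n' : ℤ) + 3) * ((m k : ℤ) * phi (n' - k))
            - 2 * (((k : ℤ) + 1) * m k * phi (n' - k)) := by
        intro k hk
        have := hφ k hk
        rw [Finset.mem_range] at hk
        have e2 : ((n' - k : ℕ) : ℤ) = (n' : ℤ) - k := Nat.cast_sub (by omega)
        have h1 : n' + 1 - k = (n' - k) + 1 := by omega
        rw [h1, phi_succ (n' - k)]
        push_cast [e2]
        ring
      rw [Finset.sum_congr rfl hφ', Finset.sum_sub_distrib]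
      have h8 : ∑ k ∈ range (n' + 1), (2 * (n' : ℤ) + 3) * ((m k : ℤ) * phi (n' - k))
          = (2 * (n' : ℤ) + 3) * phi (n' + 1) := by
        rw [← Finset.mul_sum, IHI]
      have h9 : ∑ k ∈ range (n' + 1), 2 * (((k : ℤ) + 1) * m k * phi (n' - k))
          = (m (n' + 1) : ℤ) := by
        rw [← Finset.mul_sum]
        exact IHK n' (by omega)
      have h10 : (phi (n' + 2) : ℤ) = (2 * (n' : ℤ) + 3) * phi (n' + 1) := by
        have := phi_succ (n' + 1)
        have h := congrArg (Nat.cast : ℕ → ℤ) this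
        push_cast at h
        rw [h]; ring
      rw [h8, h9, h10]
      have h11 : n' + 1 - (n' + 1) = 0 := by omega
      rw [h11, phi_zero]
      push_cast
      ring
    · -- identity K at n'+1
      show 2 * ∑ k ∈ range (n' + 2), ((k : ℤ) + 1) * m k * phi (n' + 1 - k) = (m (n' + 2) : ℤ)
      have hm2 := hmz (n' + 1)
      have e : n' + 1 + 1 = n' + 2 := rfl
      rw [e] at hm2
      push_cast at hm2
      linarith [key, hsplit, hS1, hWY, hm2]

lemma phi_one : phi 1 = 1 := by rw [phi_succ, phi_zero]
lemma phi_two : phi 2 = 3 := by rw [phi_succ, phi_one]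
lemma phi_three : phi 3 = 15 := by rw [phi_succ, phi_two]
lemma phi_four : phi 4 = 105 := by rw [phi_succ, phi_three]

lemma phi_mul_le (c i b : ℕ) (h : c ≤ b) :
    phi (c + i) * phi b ≤ phi c * phi (b + i) := by
  induction i with
  | zero => simp
  | succ i ih =>
    have h1 : c + (i + 1) = (c + i) + 1 := by omega
    have h2 : b + (i + 1) = (b + i) + 1 := by omega
    rw [h1, h2, phi_succ, phi_succ]
    calc (2 * (c + i) + 1) * phi (c + i) * phi b
        = (2 * (c + i) + 1) * (phi (c + i) * phi b) := by ring
      _ ≤ (2 * (c + i) + 1) * (phi c * phi (b + i)) := Nat.mul_le_mul_left _ ih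
      _ ≤ (2 * (b + i) + 1) * (phi c * phi (b + i)) := by
          apply Nat.mul_le_mul_right
          omega
      _ = phi c * ((2 * (b + i) + 1) * phi (b + i)) := by ring

section Bounds

variable (m : ℕ → ℕ) (hm0 : m 0 = 1)
  (hm : ∀ n : ℕ, m (n + 1) =
      (∑ k ∈ Finset.range (n + 1), m k * m (n - k)) + (2 * (n + 1) - 1) * m n)

include hm0 hm in
lemma Pm (n : ℕ) : (∑ k ∈ Finset.range n, m k * phi (n - k)) + m n = phi (n + 1) := by
  have h := (main_identity m hm0 hm n).1
  have h2 : (∑ k ∈ Finset.range (n + 1), m k * phi (n - k)) = phi (n + 1) := by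
    exact_mod_cast h
  rw [Finset.sum_range_succ, Nat.sub_self, phi_zero, mul_one] at h2
  exact h2

include hm0 hm in
lemma m_le (k : ℕ) : m k ≤ phi (k + 1) := by
  have h := Pm m hm0 hm k
  omega

include hm0 hm in
/-- Upper bound: `n·P(n) ≤ (2n+60)·φ(n)` -/
lemma upperP : ∀ n : ℕ,
    n * (∑ k ∈ Finset.range n, m k * phi (n - k)) ≤ 2 * n * phi n + 60 * phi n := by
  have hphi1 : ∀ t : ℕ, phi (t + 2) = (2 * t + 3) * phi (t + 1) := by
    intro t
    have h := phi_succ (t + 1)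
    have e : 2 * (t + 1) + 1 = 2 * t + 3 := by omega
    rw [e] at h
    exact h
  intro n
  match n with
  | 0 => simp
  | 1 =>
    simp [Finset.sum_range_one, hm0, phi_one]
  | (t + 2) =>
    -- decompose P
    have hdec : (∑ k ∈ Finset.range (t + 2), m k * phi (t + 2 - k))
        = (∑ i ∈ Finset.range t, m (i + 1) * phi (t + 1 - i)) + phi (t + 2) + m (t + 1) := by
      have h1 : (∑ k ∈ Finset.range (t + 2), m k * phi (t + 2 - k))
          = (∑ k ∈ Finset.range (t + 1), m k * phi (t + 2 - k))
            + m (t + 1) * phi (t + 2 - (t + 1)) :=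
        Finset.sum_range_succ _ _
      have h2 : (∑ k ∈ Finset.range (t + 1), m k * phi (t + 2 - k))
          = (∑ i ∈ Finset.range t, m (i + 1) * phi (t + 2 - (i + 1)))
            + m 0 * phi (t + 2 - 0) :=
        Finset.sum_range_succ' _ _
      have h3 : ∀ i ∈ Finset.range t, m (i + 1) * phi (t + 2 - (i + 1))
          = m (i + 1) * phi (t + 1 - i) := by
        intro i hi
        have e : t + 2 - (i + 1) = t + 1 - i := by omega
        rw [e]
      have e1 : t + 2 - (t + 1) = 1 := by omega
      rw [h1, h2, Finset.sum_congr rfl h3, e1, phi_one, mul_one, hm0, one_mul, Nat.sub_zero]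
    -- middle-sum termwise bound
    have hmid : (∑ i ∈ Finset.range t, m (i + 1) * phi (t + 1 - i))
        ≤ ∑ i ∈ Finset.range t,
            ((if i = 0 then 3 * phi (t + 1) else 0) + (if i = t - 1 then 3 * phi (t + 1) else 0)
            + (if i = 1 then 15 * phi t else 0) + (if i = t - 2 then 15 * phi t else 0)
            + 105 * phi (t - 1)) := by
      apply Finset.sum_le_sum
      intro i hi
      simp only [Finset.mem_range] at hi
      have hle : m (i + 1) * phi (t + 1 - i) ≤ phi (i + 2) * phi (t + 1 - i) :=
        Nat.mul_le_mul_right _ (m_le m hm0 hm (i + 1))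
      refine hle.trans ?_
      by_cases h0 : i = 0
      · subst h0
        have e' : t + 1 - 0 = t + 1 := by omega
        rw [e', show (0:ℕ) + 2 = 2 from rfl, phi_two]
        have b0 : (if (0:ℕ) = 0 then 3 * phi (t + 1) else 0) = 3 * phi (t + 1) := if_pos rfl
        omega
      by_cases h1 : i = t - 1
      · have e : i + 2 = t + 1 := by omega
        have e' : t + 1 - i = 2 := by omega
        rw [e, e', phi_two]
        have b1 : (if i = t - 1 then 3 * phi (t + 1) else 0) = 3 * phi (t + 1) := if_pos h1
        omega
      by_cases h2 : i = 1
      · subst h2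
        have e' : t + 1 - 1 = t := by omega
        rw [e', show (1:ℕ) + 2 = 3 from rfl, phi_three]
        have b2 : (if (1:ℕ) = 1 then 15 * phi t else 0) = 15 * phi t := if_pos rfl
        omega
      by_cases h3 : i = t - 2
      · have e : i + 2 = t := by omega
        have e' : t + 1 - i = 3 := by omega
        rw [e, e', phi_three]
        have b3 : (if i = t - 2 then 15 * phi t else 0) = 15 * phi t := if_pos h3
        omega
      · have e : i + 2 = 4 + (i - 2) := by omega
        have hb : (4 : ℕ) ≤ t + 1 - i := by omega
        have e' : (t + 1 - i) + (i - 2) = t - 1 := by omega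
        have hmm := phi_mul_le 4 (i - 2) (t + 1 - i) hb
        rw [e', phi_four] at hmm
        rw [e]
        omega
    -- sum of the bound
    have hsum : (∑ i ∈ Finset.range t,
            ((if i = 0 then 3 * phi (t + 1) else 0) + (if i = t - 1 then 3 * phi (t + 1) else 0)
            + (if i = 1 then 15 * phi t else 0) + (if i = t - 2 then 15 * phi t else 0)
            + 105 * phi (t - 1)))
        ≤ 6 * phi (t + 1) + 30 * phi t + 105 * t * phi (t - 1) := by
      simp only [Finset.sum_add_distrib, Finset.sum_ite_eq', Finset.sum_const,
        Finset.card_range, smul_eq_mul]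
      have hr : t * (105 * phi (t - 1)) = 105 * t * phi (t - 1) := by ring
      have b1 : (if (0:ℕ) ∈ Finset.range t then 3 * phi (t+1) else 0) ≤ 3 * phi (t+1) := by
        split <;> omega
      have b2 : (if t - 1 ∈ Finset.range t then 3 * phi (t+1) else 0) ≤ 3 * phi (t+1) := by
        split <;> omega
      have b3 : (if (1:ℕ) ∈ Finset.range t then 15 * phi t else 0) ≤ 15 * phi t := by
        split <;> omega
      have b4 : (if t - 2 ∈ Finset.range t then 15 * phi t else 0) ≤ 15 * phi t := by
        split <;> omega
      omega
    -- coefficient inequalities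
    have c1 : (t + 2) * (6 * phi (t + 1)) ≤ 6 * phi (t + 2) := by
      calc (t + 2) * (6 * phi (t + 1)) = (6 * (t + 2)) * phi (t + 1) := by ring
        _ ≤ (6 * (2 * t + 3)) * phi (t + 1) := Nat.mul_le_mul_right _ (by omega)
        _ = 6 * phi (t + 2) := by rw [hphi1 t]; ring
    have c2 : (t + 2) * (30 * phi t) ≤ 30 * phi (t + 2) := by
      have h : phi (t + 2) = (2 * t + 3) * ((2 * t + 1) * phi t) := by
        rw [hphi1 t, phi_succ t]
      calc (t + 2) * (30 * phi t) = (30 * (t + 2)) * phi t := by ring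
        _ ≤ (30 * ((2 * t + 3) * (2 * t + 1))) * phi t :=
            Nat.mul_le_mul_right _ (by nlinarith)
        _ = 30 * phi (t + 2) := by rw [h]; ring
    have c3 : (t + 2) * (105 * t * phi (t - 1)) ≤ 24 * phi (t + 2) := by
      match t with
      | 0 => simp
      | (u + 1) =>
        have h : phi (u + 3) = (2 * u + 5) * ((2 * u + 3) * ((2 * u + 1) * phi u)) := by
          have a1 := phi_succ (u + 2)
          have a2 := phi_succ (u + 1)
          have a3 := phi_succ u
          have e1 : 2 * (u + 2) + 1 = 2 * u + 5 := by omega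
          have e2 : 2 * (u + 1) + 1 = 2 * u + 3 := by omega
          rw [e1] at a1
          rw [e2] at a2
          rw [a1, a2, a3]
        have hcoef : 105 * (u + 3) * (u + 1) ≤ 24 * ((2 * u + 5) * ((2 * u + 3) * (2 * u + 1))) := by
          nlinarith [Nat.zero_le (u * u * u), Nat.zero_le (u * u)]
        have e : u + 1 - 1 = u := by omega
        rw [e]
        calc (u + 1 + 2) * (105 * (u + 1) * phi u)
            = (105 * (u + 3) * (u + 1)) * phi u := by ring
          _ ≤ (24 * ((2 * u + 5) * ((2 * u + 3) * (2 * u + 1)))) * phi u :=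
              Nat.mul_le_mul_right _ hcoef
          _ = 24 * phi (u + 3) := by rw [h]; ring
    -- assemble
    have hmle : m (t + 1) ≤ phi (t + 2) := m_le m hm0 hm (t + 1)
    calc (t + 2) * (∑ k ∈ Finset.range (t + 2), m k * phi (t + 2 - k))
        = (t + 2) * ((∑ i ∈ Finset.range t, m (i + 1) * phi (t + 1 - i))
            + phi (t + 2) + m (t + 1)) := by rw [hdec]
      _ ≤ (t + 2) * ((6 * phi (t + 1) + 30 * phi t + 105 * t * phi (t - 1))
            + phi (t + 2) + phi (t + 2)) := by
          apply Nat.mul_le_mul_left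
          have := hmid.trans hsum
          omega
      _ = (t + 2) * (6 * phi (t + 1)) + (t + 2) * (30 * phi t)
            + (t + 2) * (105 * t * phi (t - 1)) + 2 * (t + 2) * phi (t + 2) := by ring
      _ ≤ 6 * phi (t + 2) + 30 * phi (t + 2) + 24 * phi (t + 2) + 2 * (t + 2) * phi (t + 2) := by
          omega
      _ = 2 * (t + 2) * phi (t + 2) + 60 * phi (t + 2) := by ring

include hm0 hm in
/-- Lower bound: `2n·φ(n) ≤ n·P(n) + 62·φ(n)` -/
lemma lowerP : ∀ n : ℕ, 1 ≤ n →
    2 * n * phi n ≤ n * (∑ k ∈ Finset.range n, m k * phi (n - k)) + 62 * phi n := by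
  intro n hn
  match n, hn with
  | 1, _ =>
    simp [Finset.sum_range_one, hm0, phi_one]
  | (t + 2), _ =>
    have hphi1 : phi (t + 2) = (2 * t + 3) * phi (t + 1) := by
      have h := phi_succ (t + 1)
      have e : 2 * (t + 1) + 1 = 2 * t + 3 := by omega
      rw [e] at h
      exact h
    have hdec : phi (t + 2) + m (t + 1) ≤ ∑ k ∈ Finset.range (t + 2), m k * phi (t + 2 - k) := by
      have h1 : (∑ k ∈ Finset.range (t + 2), m k * phi (t + 2 - k))
          = (∑ k ∈ Finset.range (t + 1), m k * phi (t + 2 - k))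
            + m (t + 1) * phi (t + 2 - (t + 1)) :=
        Finset.sum_range_succ _ _
      have h2 : (∑ k ∈ Finset.range (t + 1), m k * phi (t + 2 - k))
          = (∑ i ∈ Finset.range t, m (i + 1) * phi (t + 2 - (i + 1)))
            + m 0 * phi (t + 2 - 0) :=
        Finset.sum_range_succ' _ _
      have e1 : t + 2 - (t + 1) = 1 := by omega
      rw [h1, h2, e1, phi_one, mul_one, hm0, one_mul, Nat.sub_zero]
      omega
    have hPm' : (∑ k ∈ Finset.range (t + 1), m k * phi (t + 1 - k)) + m (t + 1) = phi (t + 2) :=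
      Pm m hm0 hm (t + 1)
    have hup := upperP m hm0 hm (t + 1)
    have hP1 : (t + 2) * (∑ k ∈ Finset.range (t + 1), m k * phi (t + 1 - k)) ≤ 62 * phi (t + 2) := by
      calc (t + 2) * (∑ k ∈ Finset.range (t + 1), m k * phi (t + 1 - k))
          ≤ (2 * (t + 1)) * (∑ k ∈ Finset.range (t + 1), m k * phi (t + 1 - k)) :=
            Nat.mul_le_mul_right _ (by omega)
        _ = 2 * ((t + 1) * (∑ k ∈ Finset.range (t + 1), m k * phi (t + 1 - k))) := by ring
        _ ≤ 2 * (2 * (t + 1) * phi (t + 1) + 60 * phi (t + 1)) := by omega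
        _ = (4 * t + 124) * phi (t + 1) := by ring
        _ ≤ (62 * (2 * t + 3)) * phi (t + 1) := Nat.mul_le_mul_right _ (by omega)
        _ = 62 * phi (t + 2) := by rw [hphi1]; ring
    have e : 2 * (t + 2) * phi (t + 2)
        = (t + 2) * (phi (t + 2) + m (t + 1))
          + (t + 2) * (∑ k ∈ Finset.range (t + 1), m k * phi (t + 1 - k)) := by
      calc 2 * (t + 2) * phi (t + 2)
          = (t + 2) * phi (t + 2)
            + (t + 2) * ((∑ k ∈ Finset.range (t + 1), m k * phi (t + 1 - k)) + m (t + 1)) := by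
            rw [hPm']; ring
        _ = _ := by ring
    rw [e]
    have h4 : (t + 2) * (phi (t + 2) + m (t + 1))
        ≤ (t + 2) * (∑ k ∈ Finset.range (t + 2), m k * phi (t + 2 - k)) :=
      Nat.mul_le_mul_left _ hdec
    omega

end Bounds


/-- There is a constant `C > 0` such that for all `n ≥ 1`,
`|m(n)/φ(n) − (2n−1)| ≤ C/n`; in particular `m(n)/φ(n) = 2n − 1 + O(1/n)`. -/
theorem maps_asymptotic_ratio
    (m : ℕ → ℕ) (hm0 : m 0 = 1)
    (hm : ∀ n : ℕ, m (n + 1) =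
      (∑ k ∈ Finset.range (n + 1), m k * m (n - k)) + (2 * (n + 1) - 1) * m n) :
    ∃ C : ℝ, 0 < C ∧ ∀ n : ℕ, 1 ≤ n →
      |(m n : ℝ) / (phi n : ℝ) - (2 * (n : ℝ) - 1)| ≤ C / n := by
  refine ⟨62, by norm_num, ?_⟩
  intro n hn
  have hphi : (0:ℝ) < (phi n : ℝ) := by exact_mod_cast phi_pos n
  have hnpos : (0:ℝ) < (n : ℝ) := by exact_mod_cast hn
  have hPm' := Pm m hm0 hm n
  have hphi2 : phi (n + 1) = (2 * n + 1) * phi n := phi_succ n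
  have hup := upperP m hm0 hm n
  have hlo := lowerP m hm0 hm n hn
  have hmR : (m n : ℝ) = (2 * (n:ℝ) + 1) * phi n
      - (∑ k ∈ Finset.range n, m k * phi (n - k)) := by
    have hN : (∑ k ∈ Finset.range n, m k * phi (n - k)) + m n = (2 * n + 1) * phi n := by
      omega
    have h' : ((∑ k ∈ Finset.range n, m k * phi (n - k) : ℕ) : ℝ) + (m n : ℝ)
        = (2 * (n:ℝ) + 1) * (phi n : ℝ) := by exact_mod_cast hN
    linarith
  have heq : (m n : ℝ) / (phi n : ℝ) - (2 * (n : ℝ) - 1)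
      = 2 - ((∑ k ∈ Finset.range n, m k * phi (n - k) : ℕ) : ℝ) / (phi n : ℝ) := by
    rw [hmR]
    field_simp
    ring
  rw [heq, abs_le]
  have h1 : (n:ℝ) * ((∑ k ∈ Finset.range n, m k * phi (n - k) : ℕ) : ℝ)
      ≤ 2 * (n:ℝ) * phi n + 62 * phi n := by
    have h : n * (∑ k ∈ Finset.range n, m k * phi (n - k)) ≤ 2 * n * phi n + 62 * phi n :=
      hup.trans (by omega)
    exact_mod_cast h
  have h2 : 2 * (n:ℝ) * phi n
      ≤ (n:ℝ) * ((∑ k ∈ Finset.range n, m k * phi (n - k) : ℕ) : ℝ) + 62 * phi n := by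
    exact_mod_cast hlo
  constructor
  · have key : (((∑ k ∈ Finset.range n, m k * phi (n - k) : ℕ) : ℝ) - 2 * phi n) * n
        ≤ 62 * phi n := by nlinarith [h1]
    have hd := (div_le_div_iff₀ hphi hnpos).mpr key
    have e2 : (((∑ k ∈ Finset.range n, m k * phi (n - k) : ℕ) : ℝ) - 2 * phi n) / (phi n : ℝ)
        = ((∑ k ∈ Finset.range n, m k * phi (n - k) : ℕ) : ℝ) / (phi n : ℝ) - 2 := by
      field_simp
    linarith
  · have key : (2 * (phi n : ℝ) - ((∑ k ∈ Finset.range n, m k * phi (n - k) : ℕ) : ℝ)) * n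
        ≤ 62 * phi n := by nlinarith [h2]
    have hd := (div_le_div_iff₀ hphi hnpos).mpr key
    have e2 : (2 * (phi n : ℝ) - ((∑ k ∈ Finset.range n, m k * phi (n - k) : ℕ) : ℝ)) / (phi n : ℝ)
        = 2 - ((∑ k ∈ Finset.range n, m k * phi (n - k) : ℕ) : ℝ) / (phi n : ℝ) := by
      field_simp
    linarith
end

section
/- For every n ≥ 0 and every real v, Σ_{j=0}^{n} x_j(v)·s_{n−j}(v) = (2n + v)·s_n(v), where s_n(v) := Π_{m=1}^{n} (2m+v−2)(2m+v−1)/(2m) (equivalently, the generating function S(z,v)=Σ_n s_n(v) z^n with s_n(v)=((2n+v−2)(2n+v−1)/(2n))·s_{n−1}(v), s_0=1, satisfies X·S = v·S + 2z·∂_z S for X(z,v)=Σ_n x_n(v) z^n). -/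
open Polynomial

/-- `s_n(v) = Π_{m=1}^{n} (2m+v−2)(2m+v−1)/(2m)`. -/
noncomputable def s (n : ℕ) (v : ℝ) : ℝ :=
  ∏ i ∈ Finset.range n,
    ((2 * ((i : ℝ) + 1) + v - 2) * (2 * ((i : ℝ) + 1) + v - 1) / (2 * ((i : ℝ) + 1)))

/-- For every `n ≥ 0` and every real `v`,
`Σ_{j=0}^{n} x_j(v)·s_{n−j}(v) = (2n + v)·s_n(v)`, i.e. `X·S = v·S + 2z·∂_z S`. -/
theorem vertices_linearized
    (x : ℕ → Polynomial ℝ) (hx0 : x 0 = X)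
    (hx : ∀ n : ℕ, x (n + 1) =
      C (2 * ((n : ℝ) + 1) - 1) * x n + ∑ i ∈ Finset.range (n + 1), x i * x (n - i)) :
    ∀ (n : ℕ) (v : ℝ),
      (∑ j ∈ Finset.range (n + 1), (x j).eval v * s (n - j) v) = (2 * (n : ℝ) + v) * s n v := by
  intro n v
  set a : ℕ → ℝ := fun j => (x j).eval v with ha
  have ha0 : a 0 = v := by simp [ha, hx0]
  have haS : ∀ m : ℕ, a (m + 1) =
      (2 * (m : ℝ) + 1) * a m + ∑ p ∈ Finset.HasAntidiagonal.antidiagonal m, a p.1 * a p.2 := by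
    intro m
    have h := congrArg (Polynomial.eval v) (hx m)
    rw [Finset.Nat.sum_antidiagonal_eq_sum_range_succ_mk (fun p => a p.1 * a p.2) m]
    simp only [ha, eval_add, eval_mul, eval_C, eval_finset_sum] at h ⊢
    rw [h]; congr 1; ring
  have hs0 : s 0 v = 1 := by simp [s]
  have hsrec : ∀ m : ℕ, (2 * (m : ℝ) + 2) * s (m + 1) v
      = (2 * (m : ℝ) + v) * (2 * (m : ℝ) + v + 1) * s m v := by
    intro m
    have h : s (m + 1) v = s m v *
        ((2 * ((m : ℝ) + 1) + v - 2) * (2 * ((m : ℝ) + 1) + v - 1) / (2 * ((m : ℝ) + 1))) := by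
      simp only [s]; rw [Finset.prod_range_succ]
    rw [h]
    have h2 : (2 * ((m : ℝ) + 1)) ≠ 0 := by positivity
    field_simp
    ring
  set A : PowerSeries ℝ := PowerSeries.mk a with hA
  set S : PowerSeries ℝ := PowerSeries.mk (fun k => s k v) with hS
  have hsig : ∀ k : ℕ, (PowerSeries.coeff k) (A * S)
      = ∑ p ∈ Finset.HasAntidiagonal.antidiagonal k, a p.1 * s p.2 v := by
    intro k; rw [PowerSeries.coeff_mul]; simp [hA, hS]
  have hconv : ∀ k : ℕ, (PowerSeries.coeff k) (A * A)
      = ∑ p ∈ Finset.HasAntidiagonal.antidiagonal k, a p.1 * a p.2 := by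
    intro k; rw [PowerSeries.coeff_mul]; simp [hA]
  have key : ∀ k : ℕ, (PowerSeries.coeff k) (A * S) = (2 * (k : ℝ) + v) * s k v := by
    intro k
    induction k using Nat.strong_induction_on with
    | _ k ih =>
      cases k with
      | zero =>
        rw [hsig]
        simp [ha0, hs0]
      | succ m =>
        -- key computation
        have hkey : ∑ p ∈ Finset.HasAntidiagonal.antidiagonal m, a (p.1 + 1) * s p.2 v
            = (2 * (m : ℝ) + 2) * s (m + 1) v := by
          have step1 : ∑ p ∈ Finset.HasAntidiagonal.antidiagonal m, a (p.1 + 1) * s p.2 v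
              = ∑ p ∈ Finset.HasAntidiagonal.antidiagonal m, ((2 * (p.1 : ℝ) + 1) * a p.1 * s p.2 v)
                + ∑ p ∈ Finset.HasAntidiagonal.antidiagonal m,
                    ((∑ q ∈ Finset.HasAntidiagonal.antidiagonal p.1, a q.1 * a q.2) * s p.2 v) := by
            rw [← Finset.sum_add_distrib]
            refine Finset.sum_congr rfl fun p _ => ?_
            rw [haS p.1]; ring
          have step2 : ∑ p ∈ Finset.HasAntidiagonal.antidiagonal m,
              ((∑ q ∈ Finset.HasAntidiagonal.antidiagonal p.1, a q.1 * a q.2) * s p.2 v)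
              = ∑ p ∈ Finset.HasAntidiagonal.antidiagonal m, a p.1 * ((2 * (p.2 : ℝ) + v) * s p.2 v) := by
            have e1 : ∑ p ∈ Finset.HasAntidiagonal.antidiagonal m,
                ((∑ q ∈ Finset.HasAntidiagonal.antidiagonal p.1, a q.1 * a q.2) * s p.2 v)
                = (PowerSeries.coeff m) ((A * A) * S) := by
              rw [PowerSeries.coeff_mul]
              refine Finset.sum_congr rfl fun p _ => ?_
              rw [hconv p.1]; simp [hS]
            have e2 : (PowerSeries.coeff m) (A * (A * S))
                = ∑ p ∈ Finset.HasAntidiagonal.antidiagonal m, a p.1 * ((2 * (p.2 : ℝ) + v) * s p.2 v) := by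
              rw [PowerSeries.coeff_mul]
              refine Finset.sum_congr rfl fun p hp => ?_
              have hle : p.2 ≤ m := Finset.HasAntidiagonal.antidiagonal.snd_le hp
              rw [ih p.2 (Nat.lt_succ_of_le hle)]
              simp [hA]
            rw [e1, mul_assoc, e2]
          rw [step1, step2, ← Finset.sum_add_distrib]
          have step3 : ∑ p ∈ Finset.HasAntidiagonal.antidiagonal m,
              ((2 * (p.1 : ℝ) + 1) * a p.1 * s p.2 v + a p.1 * ((2 * (p.2 : ℝ) + v) * s p.2 v))
              = (2 * (m : ℝ) + 1 + v) * ∑ p ∈ Finset.HasAntidiagonal.antidiagonal m, a p.1 * s p.2 v := by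
            rw [Finset.mul_sum]
            refine Finset.sum_congr rfl fun p hp => ?_
            have hpm : p.1 + p.2 = m := Finset.HasAntidiagonal.mem_antidiagonal.mp hp
            have : (p.1 : ℝ) + (p.2 : ℝ) = m := by exact_mod_cast congrArg Nat.cast hpm
            linear_combination 2 * a p.1 * s p.2 v * this
          rw [step3, ← hsig, ih m (Nat.lt_succ_self m), hsrec m]
          ring
        rw [hsig, Finset.Nat.sum_antidiagonal_succ]
        simp only []
        rw [hkey, ha0]
        push_cast
        ring
  have := key n
  rw [hsig n, Finset.Nat.sum_antidiagonal_eq_sum_range_succ_mk (fun p => a p.1 * s p.2 v) n] at this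
  simpa [ha] using this
end

section
/- The number of root isthmic parts C_n of a uniform random rooted map with n edges converges in distribution to a geometric law of parameter 1/2 supported on {1, 2, 3, …}: for every integer k ≥ 1, lim_{n→∞} c_{n,k}/m(n) = 2^{−k}, and lim_{n→∞} c_{n,0}/m(n) = 0. -/
open Polynomial Filter Finset

/-- middle convolution sum: `auxT m n = ∑_{k=1}^{n} m k * m (n+1-k)`. -/
def auxT (m : ℕ → ℕ) (n : ℕ) : ℕ := ∑ i ∈ Finset.range n, m (i + 1) * m (n - i)

section nat
variable (m : ℕ → ℕ) (hm0 : m 0 = 1)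
  (hm : ∀ n : ℕ, m (n + 1) =
      (∑ k ∈ Finset.range (n + 1), m k * m (n - k)) + (2 * (n + 1) - 1) * m n)

include hm0 hm

/-- `m (n+2) = (2n+5) m (n+1) + auxT m n`. -/
lemma m_step : ∀ n : ℕ, m (n + 2) = (2 * n + 5) * m (n + 1) + auxT m n := by
  intro n
  have h := hm (n + 1)
  rw [Finset.sum_range_succ'] at h
  rw [Finset.sum_range_succ] at h
  have e1 : 2 * (n + 1 + 1) - 1 = 2 * n + 3 := by omega
  have e2 : n + 1 - (n + 1) = 0 := by omega
  have e3 : n + 1 - 0 = n + 1 := by omega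
  rw [e1, e2, e3, hm0] at h
  have e4 : (∑ x ∈ Finset.range n, m (x + 1) * m (n + 1 - (x + 1))) = auxT m n := by
    apply Finset.sum_congr rfl
    intro i hi
    have : n + 1 - (i + 1) = n - i := by omega
    rw [this]
  rw [e4] at h
  rw [h]
  ring
end nat

section nat2
variable (m : ℕ → ℕ) (hm0 : m 0 = 1)
  (hm : ∀ n : ℕ, m (n + 1) =
      (∑ k ∈ Finset.range (n + 1), m k * m (n - k)) + (2 * (n + 1) - 1) * m n)

include hm0 hm

lemma m_val1 : m 1 = 2 := by
  have h := hm 0; simp [Finset.sum_range_succ, hm0] at h; omega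

lemma m_val2 : m 2 = 10 := by
  have h := hm 1; simp [Finset.sum_range_succ, hm0, m_val1 m hm0 hm] at h; omega

lemma m_val3 : m 3 = 74 := by
  have h := hm 2
  simp [Finset.sum_range_succ, hm0, m_val1 m hm0 hm, m_val2 m hm0 hm] at h; omega

lemma m_val4 : m 4 = 706 := by
  have h := hm 3
  simp [Finset.sum_range_succ, hm0, m_val1 m hm0 hm, m_val2 m hm0 hm,
    m_val3 m hm0 hm] at h; omega

lemma m_val5 : m 5 = 8162 := by
  have h := hm 4
  simp [Finset.sum_range_succ, hm0, m_val1 m hm0 hm, m_val2 m hm0 hm,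
    m_val3 m hm0 hm, m_val4 m hm0 hm] at h; omega

lemma m_val6 : m 6 = 110410 := by
  have h := hm 5
  simp [Finset.sum_range_succ, hm0, m_val1 m hm0 hm, m_val2 m hm0 hm,
    m_val3 m hm0 hm, m_val4 m hm0 hm, m_val5 m hm0 hm] at h; omega

lemma m_val7 : m 7 = 1708394 := by
  have h := hm 6
  simp [Finset.sum_range_succ, hm0, m_val1 m hm0 hm, m_val2 m hm0 hm,
    m_val3 m hm0 hm, m_val4 m hm0 hm, m_val5 m hm0 hm, m_val6 m hm0 hm] at h; omega

/-- growth: `(2n+5) * m (n+1) ≤ m (n+2)` -/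
lemma m_growth : ∀ n : ℕ, (2 * n + 5) * m (n + 1) ≤ m (n + 2) := by
  intro n
  rw [m_step m hm0 hm n]
  exact Nat.le_add_right _ _

lemma m_pos : ∀ n : ℕ, 0 < m n := by
  intro n
  induction n with
  | zero => omega
  | succ k ih =>
    have h := hm k
    have : (2 * (k + 1) - 1) * m k ≥ 1 * 1 := by
      apply Nat.mul_le_mul <;> omega
    omega

/-- `(2n+1) * m n ≤ m (n+1)` for all n. -/
lemma m_growth1 : ∀ n : ℕ, (2 * n + 1) * m n ≤ m (n + 1) := by
  intro n
  match n with
  | 0 => simp [hm0, m_val1 m hm0 hm]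
  | (k + 1) =>
    calc (2 * (k + 1) + 1) * m (k + 1) ≤ (2 * k + 5) * m (k + 1) := by
          apply Nat.mul_le_mul_right; omega
      _ ≤ m (k + 2) := m_growth m hm0 hm k

end nat2

lemma auxT_sym (m : ℕ → ℕ) (n : ℕ) :
    ∑ i ∈ Finset.range n, (2 * i + 5) * (m (i + 1) * m (n - i)) = (n + 4) * auxT m n := by
  set f : ℕ → ℕ := fun i => (2 * i + 5) * (m (i + 1) * m (n - i)) with hf
  have hrefl : ∑ i ∈ Finset.range n, f (n - 1 - i) = ∑ i ∈ Finset.range n, f i :=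
    Finset.sum_range_reflect f n
  have hterm : ∀ i ∈ Finset.range n, f (n - 1 - i) =
      (2 * (n - 1 - i) + 5) * (m (i + 1) * m (n - i)) := by
    intro i hi
    have hi' : i < n := Finset.mem_range.mp hi
    have e1 : n - 1 - i + 1 = n - i := by omega
    have e2 : n - (n - 1 - i) = i + 1 := by omega
    simp only [hf, e1, e2]
    ring
  have key : 2 * (∑ i ∈ Finset.range n, f i) = (2 * n + 8) * auxT m n := by
    calc 2 * (∑ i ∈ Finset.range n, f i)
        = (∑ i ∈ Finset.range n, f i) + ∑ i ∈ Finset.range n, f (n - 1 - i) := by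
          rw [hrefl]; ring
      _ = ∑ i ∈ Finset.range n,
            ((2 * i + 5) * (m (i + 1) * m (n - i)) +
              (2 * (n - 1 - i) + 5) * (m (i + 1) * m (n - i))) := by
          rw [← Finset.sum_add_distrib]
          apply Finset.sum_congr rfl
          intro i hi
          rw [hterm i hi]
      _ = ∑ i ∈ Finset.range n, (2 * n + 8) * (m (i + 1) * m (n - i)) := by
          apply Finset.sum_congr rfl
          intro i hi
          have hi' : i < n := Finset.mem_range.mp hi
          have : (2 * i + 5) + (2 * (n - 1 - i) + 5) = 2 * n + 8 := by omega
          rw [← add_mul, this]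
      _ = (2 * n + 8) * auxT m n := by rw [← Finset.mul_sum]; rfl
  have h2 : 2 * (∑ i ∈ Finset.range n, f i) = 2 * ((n + 4) * auxT m n) := by
    rw [key]; ring
  exact Nat.eq_of_mul_eq_mul_left (by norm_num) h2

section nat3
variable (m : ℕ → ℕ) (hm0 : m 0 = 1)
  (hm : ∀ n : ℕ, m (n + 1) =
      (∑ k ∈ Finset.range (n + 1), m k * m (n - k)) + (2 * (n + 1) - 1) * m n)

include hm0 hm

lemma auxT_ident : ∀ n : ℕ, auxT m (n + 1) =
    2 * m (n + 1) + (n + 4) * auxT m n + ∑ i ∈ Finset.range n, auxT m i * m (n - i) := by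
  intro n
  have h : auxT m (n + 1) = ∑ i ∈ Finset.range (n + 1), m (i + 1) * m (n + 1 - i) := rfl
  rw [Finset.sum_range_succ'] at h
  rw [m_val1 m hm0 hm] at h
  have e4 : (∑ k ∈ Finset.range n, m (k + 1 + 1) * m (n + 1 - (k + 1)))
      = ∑ k ∈ Finset.range n, ((2 * k + 5) * (m (k + 1) * m (n - k)) + auxT m k * m (n - k)) := by
    apply Finset.sum_congr rfl
    intro i hi
    have e5 : n + 1 - (i + 1) = n - i := by omega
    rw [e5, m_step m hm0 hm i]
    ring
  rw [e4, Finset.sum_add_distrib, auxT_sym m n] at h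
  simp only [Nat.sub_zero] at h
  rw [h]
  ring
end nat3

section nat4
variable (m : ℕ → ℕ) (hm0 : m 0 = 1)
  (hm : ∀ n : ℕ, m (n + 1) =
      (∑ k ∈ Finset.range (n + 1), m k * m (n - k)) + (2 * (n + 1) - 1) * m n)

include hm0 hm

lemma auxT_le : ∀ n : ℕ, auxT m n ≤ 10 * m n := by
  intro n
  induction n using Nat.strong_induction_on with
  | _ n ih =>
    match n, ih with
    | 0, _ => simp [auxT]
    | 1, _ =>
      have h := m_step m hm0 hm 1
      rw [m_val3 m hm0 hm, m_val2 m hm0 hm] at h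
      rw [m_val1 m hm0 hm]; omega
    | 2, _ =>
      have h := m_step m hm0 hm 2
      rw [m_val4 m hm0 hm, m_val3 m hm0 hm] at h
      rw [m_val2 m hm0 hm]; omega
    | 3, _ =>
      have h := m_step m hm0 hm 3
      rw [m_val5 m hm0 hm, m_val4 m hm0 hm] at h
      rw [m_val3 m hm0 hm]; omega
    | 4, _ =>
      have h := m_step m hm0 hm 4
      rw [m_val6 m hm0 hm, m_val5 m hm0 hm] at h
      rw [m_val4 m hm0 hm]; omega
    | 5, _ =>
      have h := m_step m hm0 hm 5
      rw [m_val7 m hm0 hm, m_val6 m hm0 hm] at h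
      rw [m_val5 m hm0 hm]; omega
    | (k + 6), ih =>
      have hid := auxT_ident m hm0 hm (k + 5)
      -- the convolution third sum
      have hthird : (∑ i ∈ Finset.range (k + 5), auxT m i * m (k + 5 - i))
          ≤ 100 * m (k + 4) := by
        rw [Finset.sum_range_succ']
        have hz : auxT m 0 = 0 := by simp [auxT]
        rw [hz]
        simp only [zero_mul, add_zero]
        calc (∑ i ∈ Finset.range (k + 4), auxT m (i + 1) * m (k + 5 - (i + 1)))
            ≤ ∑ i ∈ Finset.range (k + 4), 10 * (m (i + 1) * m (k + 4 - i)) := by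
              apply Finset.sum_le_sum
              intro i hi
              have hi' : i < k + 4 := Finset.mem_range.mp hi
              have e : k + 5 - (i + 1) = k + 4 - i := by omega
              rw [e, ← mul_assoc]
              exact Nat.mul_le_mul_right _ (ih (i + 1) (by omega))
          _ = 10 * auxT m (k + 4) := by rw [← Finset.mul_sum]; rfl
          _ ≤ 10 * (10 * m (k + 4)) := Nat.mul_le_mul_left _ (ih (k + 4) (by omega))
          _ = 100 * m (k + 4) := by ring
      have h5 : auxT m (k + 5) ≤ 10 * m (k + 5) := ih (k + 5) (by omega)
      have g1 : (2 * k + 13) * m (k + 5) ≤ m (k + 6) := by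
        have := m_growth m hm0 hm (k + 4)
        calc (2 * k + 13) * m (k + 5) = (2 * (k + 4) + 5) * m (k + 5) := by ring_nf
          _ ≤ m (k + 6) := this
      have g2 : (2 * k + 11) * m (k + 4) ≤ m (k + 5) := by
        have := m_growth m hm0 hm (k + 3)
        calc (2 * k + 11) * m (k + 4) = (2 * (k + 3) + 5) * m (k + 4) := by ring_nf
          _ ≤ m (k + 5) := this
      have a1 : 100 * m (k + 4) ≤ (6 * k + 14) * m (k + 5) := by
        calc 100 * m (k + 4) ≤ ((6 * k + 14) * (2 * k + 11)) * m (k + 4) := by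
              apply Nat.mul_le_mul_right; nlinarith
          _ = (6 * k + 14) * ((2 * k + 11) * m (k + 4)) := by ring
          _ ≤ (6 * k + 14) * m (k + 5) := Nat.mul_le_mul_left _ g2
      calc auxT m (k + 6)
          = 2 * m (k + 6) + (k + 5 + 4) * auxT m (k + 5)
              + ∑ i ∈ Finset.range (k + 5), auxT m i * m (k + 5 - i) := hid
        _ ≤ 2 * m (k + 6) + (k + 9) * (10 * m (k + 5)) + 100 * m (k + 4) := by
            have h9 : k + 5 + 4 = k + 9 := by omega
            rw [h9]
            exact add_le_add (add_le_add le_rfl (Nat.mul_le_mul_left _ h5)) hthird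
        _ = 2 * m (k + 6) + (10 * k + 90) * m (k + 5) + 100 * m (k + 4) := by ring
        _ ≤ 2 * m (k + 6) + (10 * k + 90) * m (k + 5) + (6 * k + 14) * m (k + 5) :=
            add_le_add le_rfl a1
        _ = 2 * m (k + 6) + 8 * ((2 * k + 13) * m (k + 5)) := by ring
        _ ≤ 2 * m (k + 6) + 8 * m (k + 6) := by
            have := Nat.mul_le_mul_left 8 g1
            omega
        _ = 10 * m (k + 6) := by ring

end nat4

lemma coeff_le_eval_one (p : Polynomial ℝ) (h : ∀ i, 0 ≤ p.coeff i) (k : ℕ) :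
    p.coeff k ≤ p.eval 1 := by
  rw [Polynomial.eval_eq_sum_range]
  simp only [one_pow, mul_one]
  rcases le_or_gt k p.natDegree with hk | hk
  · exact Finset.single_le_sum (fun i _ => h i) (Finset.mem_range.mpr (by omega))
  · rw [Polynomial.coeff_eq_zero_of_natDegree_lt hk]
    exact Finset.sum_nonneg fun i _ => h i

section poly
variable (m : ℕ → ℕ) (c : ℕ → Polynomial ℝ) (hc0 : c 0 = 1)
  (hc : ∀ n : ℕ, c (n + 1) =
      C (2 * ((n : ℝ) + 1) - 1) * c n +
        X * ∑ i ∈ Finset.range (n + 1), C ((m i : ℝ)) * c (n - i))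

include hc0 hc

lemma c_coeff_zero_succ (n : ℕ) :
    (c (n + 1)).coeff 0 = (2 * (n : ℝ) + 1) * (c n).coeff 0 := by
  rw [hc n]
  simp only [Polynomial.coeff_add, Polynomial.mul_coeff_zero, Polynomial.coeff_C_zero,
    Polynomial.coeff_X_zero, zero_mul, add_zero]
  ring

lemma c_coeff_succ (n k : ℕ) :
    (c (n + 1)).coeff (k + 1) = (2 * (n : ℝ) + 1) * (c n).coeff (k + 1) +
      ∑ i ∈ Finset.range (n + 1), (m i : ℝ) * (c (n - i)).coeff k := by
  rw [hc n]
  simp only [Polynomial.coeff_add, Polynomial.coeff_C_mul, Polynomial.coeff_X_mul,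
    Polynomial.finset_sum_coeff]
  ring

lemma c_coeff_nonneg : ∀ n k, 0 ≤ (c n).coeff k := by
  intro n
  induction n using Nat.strong_induction_on with
  | _ n ih =>
    match n, ih with
    | 0, _ =>
      intro k
      rw [hc0, Polynomial.coeff_one]
      split <;> norm_num
    | (n + 1), ih =>
      intro k
      rcases k with _ | k
      · rw [c_coeff_zero_succ m c hc0 hc n]
        have := ih n (by omega) 0
        positivity
      · rw [c_coeff_succ m c hc0 hc n k]
        have h1 : 0 ≤ (2 * (n : ℝ) + 1) * (c n).coeff (k + 1) := by
          have := ih n (by omega) (k + 1)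
          positivity
        have h2 : 0 ≤ ∑ i ∈ Finset.range (n + 1), (m i : ℝ) * (c (n - i)).coeff k := by
          apply Finset.sum_nonneg
          intro i hi
          have hi' : i < n + 1 := Finset.mem_range.mp hi
          have := ih (n - i) (by omega) k
          positivity
        linarith

end poly

section poly2
variable (m : ℕ → ℕ) (hm0 : m 0 = 1)
  (hm : ∀ n : ℕ, m (n + 1) =
      (∑ k ∈ Finset.range (n + 1), m k * m (n - k)) + (2 * (n + 1) - 1) * m n)
  (c : ℕ → Polynomial ℝ) (hc0 : c 0 = 1)
  (hc : ∀ n : ℕ, c (n + 1) =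
      C (2 * ((n : ℝ) + 1) - 1) * c n +
        X * ∑ i ∈ Finset.range (n + 1), C ((m i : ℝ)) * c (n - i))

include hm0 hm hc0 hc

lemma c_eval_one : ∀ n, (c n).eval 1 = (m n : ℝ) := by
  intro n
  induction n using Nat.strong_induction_on with
  | _ n ih =>
    match n, ih with
    | 0, _ => rw [hc0, hm0]; simp
    | (n + 1), ih =>
      rw [hc n]
      simp only [Polynomial.eval_add, Polynomial.eval_mul, Polynomial.eval_C,
        Polynomial.eval_X, Polynomial.eval_finset_sum, one_mul]
      have hs : ∀ i ∈ Finset.range (n + 1),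
          (m i : ℝ) * (c (n - i)).eval 1 = (m i : ℝ) * (m (n - i) : ℝ) := by
        intro i hi
        have hi' : i < n + 1 := Finset.mem_range.mp hi
        rw [ih (n - i) (by omega)]
      rw [Finset.sum_congr rfl hs, ih n (by omega)]
      have hmn := hm n
      have : ((m (n + 1) : ℝ)) = (∑ k ∈ Finset.range (n + 1), (m k : ℝ) * (m (n - k) : ℝ))
          + (2 * (n : ℝ) + 1) * (m n : ℝ) := by
        rw [hmn]
        push_cast
        have e : 2 * (n + 1) - 1 = 2 * n + 1 := by omega
        rw [e]
        push_cast
        ring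
      rw [this]
      ring

lemma c_coeff_le_m (n k : ℕ) : (c n).coeff k ≤ (m n : ℝ) := by
  rw [← c_eval_one m hm0 hm c hc0 hc n]
  exact coeff_le_eval_one _ (c_coeff_nonneg m c hc0 hc n) k

end poly2

/-- discrete ODE-type convergence lemma -/
lemma ode_tendsto (r s u : ℕ → ℝ) (L : ℝ) (hL : 0 ≤ L)
    (hr0 : ∀ n, 0 ≤ r n)
    (hs0 : ∀ n, 0 ≤ s n)
    (hs : Tendsto s atTop (nhds 2))
    (hu : Tendsto u atTop (nhds (2 * L)))
    (hrec : ∀ n : ℕ, r (n + 1) * ((2 * n + 1) + s n) = (2 * n + 1) * r n + u n) :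
    Tendsto r atTop (nhds L) := by
  have hden : ∀ n : ℕ, (0 : ℝ) < 2 * n + 1 + s n := by
    intro n
    have := hs0 n
    positivity
  set d : ℕ → ℝ := fun n => |u n - 2 * L| + L * |s n - 2| with hdd
  have hd : Tendsto d atTop (nhds 0) := by
    have h1 : Tendsto (fun n => |u n - 2 * L|) atTop (nhds 0) := by
      have := (hu.sub (tendsto_const_nhds (x := 2 * L))).abs
      simpa using this
    have h2 : Tendsto (fun n => L * |s n - 2|) atTop (nhds 0) := by
      have := ((hs.sub (tendsto_const_nhds (x := (2:ℝ)))).abs).const_mul L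
      simpa using this
    simpa using h1.add h2
  have key : ∀ n : ℕ, |r (n + 1) - L| ≤
      ((2 * n + 1) * |r n - L| + d n) / (2 * n + 1 + s n) := by
    intro n
    have hdn := hden n
    have e : r (n + 1) - L =
        ((2 * n + 1) * (r n - L) + ((u n - 2 * L) + L * (2 - s n))) / (2 * n + 1 + s n) := by
      rw [eq_div_iff (ne_of_gt hdn)]
      have := hrec n
      ring_nf
      ring_nf at this
      linarith
    rw [e, abs_div, abs_of_pos hdn]
    apply (div_le_div_iff_of_pos_right hdn).mpr
    calc |(2 * n + 1) * (r n - L) + ((u n - 2 * L) + L * (2 - s n))|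
        ≤ |(2 * n + 1) * (r n - L)| + |(u n - 2 * L) + L * (2 - s n)| := abs_add_le _ _
      _ ≤ (2 * n + 1) * |r n - L| + (|u n - 2 * L| + L * |s n - 2|) := by
          apply add_le_add
          · rw [abs_mul, abs_of_pos (by positivity : (0:ℝ) < 2 * n + 1)]
          · calc |(u n - 2 * L) + L * (2 - s n)| ≤ |u n - 2 * L| + |L * (2 - s n)| := abs_add_le _ _
              _ = |u n - 2 * L| + L * |s n - 2| := by
                  rw [abs_mul, abs_of_nonneg hL, abs_sub_comm 2 (s n)]
      _ = (2 * n + 1) * |r n - L| + d n := rfl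
  rw [Metric.tendsto_atTop]
  intro ε hε
  set δ : ℝ := ε / 2 with hδdef
  have hδ : 0 < δ := by positivity
  obtain ⟨N₁, hN₁⟩ := Metric.tendsto_atTop.mp hd (δ / 2) (by positivity)
  obtain ⟨N₂, hN₂⟩ := Metric.tendsto_atTop.mp hs 1 one_pos
  set N₀ := max N₁ N₂ with hN₀def
  -- basic step bound for n ≥ N₀
  have step : ∀ n, N₀ ≤ n → |r (n + 1) - L| ≤ ((2 * n + 1) * |r n - L| + δ / 2) / (2 * n + 2) := by
    intro n hn
    have hd' : d n < δ / 2 := by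
      have := hN₁ n (le_trans (le_max_left _ _) hn)
      rw [Real.dist_eq] at this
      have hdpos : 0 ≤ d n := by positivity
      calc d n = |d n - 0| := by rw [sub_zero, abs_of_nonneg hdpos]
        _ < δ / 2 := this
    have hs' : 1 ≤ s n := by
      have := hN₂ n (le_trans (le_max_right _ _) hn)
      rw [Real.dist_eq] at this
      have := abs_lt.mp this
      linarith [this.1]
    calc |r (n + 1) - L| ≤ ((2 * n + 1) * |r n - L| + d n) / (2 * n + 1 + s n) := key n
      _ ≤ ((2 * n + 1) * |r n - L| + δ / 2) / (2 * n + 2) := by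
          apply div_le_div₀ (by positivity) (by linarith) (by positivity)
          linarith
  -- if error ≤ δ at some n ≥ N₀ it stays ≤ δ
  have stepA : ∀ n, N₀ ≤ n → |r n - L| ≤ δ → |r (n + 1) - L| ≤ δ := by
    intro n hn he
    calc |r (n + 1) - L| ≤ ((2 * n + 1) * |r n - L| + δ / 2) / (2 * n + 2) := step n hn
      _ ≤ ((2 * n + 1) * δ + δ / 2) / (2 * n + 2) := by
          apply div_le_div₀ (by positivity) ?_ (by positivity) le_rfl
          have : (2 * (n:ℝ) + 1) * |r n - L| ≤ (2 * n + 1) * δ :=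
            mul_le_mul_of_nonneg_left he (by positivity)
          linarith
      _ ≤ δ := by
          rw [div_le_iff₀ (by positivity)]
          nlinarith
  -- there is some n ≥ N₀ with error ≤ δ
  have stepB : ∃ N, N₀ ≤ N ∧ |r N - L| ≤ δ := by
    by_contra hcon
    push_neg at hcon
    -- the error decreases by δ/(4(n+1)) each step
    have dec : ∀ n, N₀ ≤ n → |r (n + 1) - L| ≤ |r n - L| - δ / 4 * (1 / (n + 1)) := by
      intro n hn
      have hgt : δ < |r n - L| := hcon n hn
      calc |r (n + 1) - L| ≤ ((2 * n + 1) * |r n - L| + δ / 2) / (2 * n + 2) := step n hn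
        _ ≤ |r n - L| - δ / 4 * (1 / (n + 1)) := by
            rw [div_le_iff₀ (by positivity)]
            have e1 : (δ / 4 * (1 / (n + 1))) * (2 * n + 2) = δ / 2 := by
              field_simp
              ring
            nlinarith
    have tele : ∀ j : ℕ, |r (N₀ + j) - L| ≤
        |r N₀ - L| - δ / 4 * (∑ i ∈ Finset.range j, (1 : ℝ) / (N₀ + i + 1)) := by
      intro j
      induction j with
      | zero => simp
      | succ j ihj =>
        have h1 := dec (N₀ + j) (Nat.le_add_right _ _)
        rw [Finset.sum_range_succ]
        have e : (N₀ + (j + 1)) = (N₀ + j) + 1 := by omega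
        rw [e]
        push_cast at h1 ⊢
        linarith
    -- harmonic divergence gives a contradiction
    have hharm := Real.tendsto_sum_range_one_div_nat_succ_atTop
    have hbig := (tendsto_atTop.mp hharm)
      ((∑ i ∈ Finset.range N₀, (1 : ℝ) / (i + 1)) + ((4 / δ) * |r N₀ - L| + 1))
    obtain ⟨M, hM⟩ := Filter.eventually_atTop.mp hbig
    have hMval := hM (N₀ + M) (Nat.le_add_left _ _)
    rw [Finset.sum_range_add] at hMval
    have hsum : (∑ i ∈ Finset.range M, (1 : ℝ) / (↑(N₀ + i) + 1))
        = ∑ i ∈ Finset.range M, (1 : ℝ) / (N₀ + i + 1) := by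
      apply Finset.sum_congr rfl
      intro i _
      push_cast
      ring_nf
    rw [hsum] at hMval
    have hS : (4 / δ) * |r N₀ - L| + 1 ≤ ∑ i ∈ Finset.range M, (1 : ℝ) / (N₀ + i + 1) := by
      linarith
    have htel := tele M
    have habs : (0:ℝ) ≤ |r (N₀ + M) - L| := abs_nonneg _
    have hfin : δ / 4 * (∑ i ∈ Finset.range M, (1 : ℝ) / (N₀ + i + 1))
        ≥ δ / 4 * ((4 / δ) * |r N₀ - L| + 1) := by
      apply mul_le_mul_of_nonneg_left hS (by positivity)
    have he : δ / 4 * ((4 / δ) * |r N₀ - L| + 1) = |r N₀ - L| + δ / 4 := by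
      field_simp
    rw [he] at hfin
    linarith
  obtain ⟨N, hNge, hNle⟩ := stepB
  refine ⟨N, ?_⟩
  have hstay : ∀ j : ℕ, |r (N + j) - L| ≤ δ := by
    intro j
    induction j with
    | zero => simpa using hNle
    | succ j ihj =>
      have e : N + (j + 1) = (N + j) + 1 := by omega
      rw [e]
      exact stepA (N + j) (le_trans hNge (Nat.le_add_right _ _)) ihj
  intro n hn
  rw [Real.dist_eq]
  have : |r n - L| ≤ δ := by
    have e : n = N + (n - N) := by omega
    rw [e]
    exact hstay (n - N)
  have : δ < ε := by rw [hδdef]; linarith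
  linarith [hstay (n - N), (show n = N + (n - N) by omega) ▸ (hstay (n - N))]

lemma lin_atTop : Tendsto (fun n : ℕ => 2 * (n : ℝ) - 1) atTop atTop := by
  apply tendsto_atTop_add_const_right
  exact (tendsto_natCast_atTop_atTop (R := ℝ)).const_mul_atTop two_pos

lemma const_div_lin (a : ℝ) : Tendsto (fun n : ℕ => a / (2 * (n : ℝ) - 1)) atTop (nhds 0) :=
  tendsto_const_nhds.div_atTop lin_atTop

section final
variable (m : ℕ → ℕ) (hm0 : m 0 = 1)
  (hm : ∀ n : ℕ, m (n + 1) =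
      (∑ k ∈ Finset.range (n + 1), m k * m (n - k)) + (2 * (n + 1) - 1) * m n)
  (c : ℕ → Polynomial ℝ) (hc0 : c 0 = 1)
  (hc : ∀ n : ℕ, c (n + 1) =
      C (2 * ((n : ℝ) + 1) - 1) * c n +
        X * ∑ i ∈ Finset.range (n + 1), C ((m i : ℝ)) * c (n - i))

include hm0 hm hc0 hc

omit hc0 hc in
lemma mR_pos (n : ℕ) : (0 : ℝ) < (m n : ℝ) := by
  exact_mod_cast m_pos m hm0 hm n

omit hc0 hc in
/-- `auxT m n ≤ (10/(2n+1)) m (n+1)` in divided real form. -/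
lemma auxT_div_le (n : ℕ) : (auxT m n : ℝ) / (m (n + 1) : ℝ) ≤ 10 / (2 * (n : ℝ) + 1) := by
  have hm1 : (0:ℝ) < (m (n+1) : ℝ) := by exact_mod_cast m_pos m hm0 hm (n+1)
  rw [div_le_div_iff₀ hm1 (by positivity)]
  have h1 : (auxT m n : ℝ) ≤ 10 * m n := by exact_mod_cast auxT_le m hm0 hm n
  have h2 : (2 * (n:ℝ) + 1) * m n ≤ m (n + 1) := by exact_mod_cast m_growth1 m hm0 hm n
  nlinarith [mR_pos m hm0 hm n]

omit hc0 hc in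
lemma s_tendsto :
    Tendsto (fun n : ℕ => (m (n + 1) : ℝ) / (m n : ℝ) - (2 * (n : ℝ) + 1)) atTop (nhds 2) := by
  have hup : ∀ᶠ n : ℕ in atTop,
      (m (n + 1) : ℝ) / (m n : ℝ) - (2 * (n : ℝ) + 1) ≤ 2 + 10 / (2 * (n : ℝ) - 1) := by
    rw [eventually_atTop]
    refine ⟨1, ?_⟩
    intro n hn
    obtain ⟨j, rfl⟩ : ∃ j, n = j + 1 := ⟨n - 1, by omega⟩
    have hid := m_step m hm0 hm j
    have hmj : (0:ℝ) < (m (j+1) : ℝ) := mR_pos m hm0 hm (j+1)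
    have e : (m (j + 2) : ℝ) / (m (j+1) : ℝ) - (2 * ((j:ℝ)+1) + 1)
        = 2 + (auxT m j : ℝ) / (m (j + 1) : ℝ) := by
      rw [show ((m (j+2) : ℝ)) = (2*(j:ℝ)+5) * m (j+1) + auxT m j by exact_mod_cast hid]
      field_simp
      ring
    push_cast
    push_cast at e
    rw [e]
    have := auxT_div_le m hm0 hm j
    have e2 : 2 * ((j:ℝ) + 1) - 1 = 2 * (j:ℝ) + 1 := by ring
    rw [e2]
    linarith
  have hlo : ∀ᶠ n : ℕ in atTop,
      (2:ℝ) ≤ (m (n + 1) : ℝ) / (m n : ℝ) - (2 * (n : ℝ) + 1) := by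
    rw [eventually_atTop]
    refine ⟨1, ?_⟩
    intro n hn
    obtain ⟨j, rfl⟩ : ∃ j, n = j + 1 := ⟨n - 1, by omega⟩
    have hid := m_step m hm0 hm j
    have hmj : (0:ℝ) < (m (j+1) : ℝ) := mR_pos m hm0 hm (j+1)
    have e : (m (j + 2) : ℝ) / (m (j+1) : ℝ) - (2 * ((j:ℝ)+1) + 1)
        = 2 + (auxT m j : ℝ) / (m (j + 1) : ℝ) := by
      rw [show ((m (j+2) : ℝ)) = (2*(j:ℝ)+5) * m (j+1) + auxT m j by exact_mod_cast hid]
      field_simp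
      ring
    push_cast
    push_cast at e
    rw [e]
    have : (0:ℝ) ≤ (auxT m j : ℝ) / (m (j + 1) : ℝ) := by positivity
    linarith
  have hhi : Tendsto (fun n : ℕ => 2 + 10 / (2 * (n : ℝ) - 1)) atTop (nhds 2) := by
    have := (const_div_lin 10).const_add 2
    simpa using this
  exact tendsto_of_tendsto_of_tendsto_of_le_of_le' tendsto_const_nhds hhi hlo hup

omit hc0 hc in
lemma s_nonneg (n : ℕ) : (0:ℝ) ≤ (m (n + 1) : ℝ) / (m n : ℝ) - (2 * (n : ℝ) + 1) := by
  have hmn : (0:ℝ) < (m n : ℝ) := mR_pos m hm0 hm n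
  rw [sub_nonneg, le_div_iff₀ hmn]
  exact_mod_cast m_growth1 m hm0 hm n

end final

/-- The number of root isthmic parts `C_n` of a uniform random rooted map
with `n` edges converges in distribution to a geometric law of parameter `1/2` supported on
`{1, 2, 3, …}`: for every `k ≥ 1`, `lim_{n→∞} c_{n,k}/m(n) = 2^{−k}`, and
`lim_{n→∞} c_{n,0}/m(n) = 0`. -/
theorem root_isthmic_parts_geometric
    (m : ℕ → ℕ) (hm0 : m 0 = 1)
    (hm : ∀ n : ℕ, m (n + 1) =
      (∑ k ∈ Finset.range (n + 1), m k * m (n - k)) + (2 * (n + 1) - 1) * m n)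
    (c : ℕ → Polynomial ℝ) (hc0 : c 0 = 1)
    (hc : ∀ n : ℕ, c (n + 1) =
      C (2 * ((n : ℝ) + 1) - 1) * c n +
        X * ∑ i ∈ Finset.range (n + 1), C ((m i : ℝ)) * c (n - i)) :
    (∀ k : ℕ, 1 ≤ k →
        Tendsto (fun n : ℕ => (c n).coeff k / (m n : ℝ)) atTop
          (nhds ((2 : ℝ) ^ (-(k : ℤ))))) ∧
      Tendsto (fun n : ℕ => (c n).coeff 0 / (m n : ℝ)) atTop (nhds 0) := by
  have hmRpos : ∀ n, (0:ℝ) < (m n : ℝ) := mR_pos m hm0 hm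
  have hcnn := c_coeff_nonneg m c hc0 hc
  have hclem := c_coeff_le_m m hm0 hm c hc0 hc
  have main : ∀ k : ℕ, Tendsto (fun n : ℕ => (c n).coeff k / (m n : ℝ)) atTop
      (nhds (if k = 0 then (0:ℝ) else (2:ℝ) ^ (-(k:ℤ)))) := by
    intro k
    induction k with
    | zero =>
      rw [if_pos rfl]
      -- the bound (2(j+1)+1) * coeff_0 (c (j+1)) ≤ 3 m (j+1)
      have hb : ∀ j : ℕ, (2*((j:ℝ)+1)+1) * (c (j+1)).coeff 0 ≤ 3 * (m (j+1) : ℝ) := by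
        intro j
        induction j with
        | zero =>
          have h1 : (c 1).coeff 0 = 1 := by
            rw [c_coeff_zero_succ m c hc0 hc 0, hc0]
            norm_num
          rw [h1, show ((m 1 : ℝ)) = 2 by exact_mod_cast m_val1 m hm0 hm]
          norm_num
        | succ j ihj =>
          rw [c_coeff_zero_succ m c hc0 hc (j+1)]
          have hg : (2*(j:ℝ)+5) * (m (j+1):ℝ) ≤ (m (j+2):ℝ) := by
            exact_mod_cast m_growth m hm0 hm j
          have hpos := hcnn (j+1) 0
          push_cast at ihj ⊢
          nlinarith [ihj, hg, hpos]
      apply tendsto_of_tendsto_of_tendsto_of_le_of_le' tendsto_const_nhds (const_div_lin 3)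
      · exact Filter.Eventually.of_forall fun n => div_nonneg (hcnn n 0) (hmRpos n).le
      · rw [eventually_atTop]
        refine ⟨1, ?_⟩
        intro n hn
        obtain ⟨j, rfl⟩ : ∃ j, n = j + 1 := ⟨n - 1, by omega⟩
        push_cast
        have hbj := hb j
        have h2 : (0:ℝ) < 2 * ((j:ℝ)+1) - 1 := by
          have : (0:ℝ) ≤ (j:ℝ) := Nat.cast_nonneg j
          linarith
        rw [div_le_div_iff₀ (hmRpos (j+1)) h2]
        have h3 : (c (j+1)).coeff 0 * (2 * ((j:ℝ)+1) - 1) ≤ (2*((j:ℝ)+1)+1) * (c (j+1)).coeff 0 := by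
          have := hcnn (j+1) 0
          nlinarith
        push_cast at hbj h3 ⊢
        linarith
    | succ k ihk =>
      rw [if_neg (by omega)]
      set L : ℝ := (2:ℝ) ^ (-((k:ℤ)+1)) with hLdef
      have hL : 0 ≤ L := by positivity
      have hgoalL : (2:ℝ) ^ (-((k+1 : ℕ) : ℤ)) = L := by
        rw [hLdef]; norm_num
      rw [hgoalL]
      set sf : ℕ → ℝ := fun n => (m (n + 1) : ℝ) / (m n : ℝ) - (2 * (n : ℝ) + 1) with hsf
      set uf : ℕ → ℝ := fun n =>
        (∑ i ∈ Finset.range (n+1), (m i:ℝ) * (c (n-i)).coeff k) / (m n : ℝ) with huf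
      -- the error term
      set Er : ℕ → ℝ := fun n =>
        (∑ i ∈ Finset.range (n-1), (m (i+1):ℝ) * (c (n-1-i)).coeff k) / (m n : ℝ) with hEr
      have hErlo : ∀ n, 0 ≤ Er n := by
        intro n
        apply div_nonneg ?_ (le_of_lt (hmRpos n))
        apply Finset.sum_nonneg
        intro i _
        have := hcnn (n-1-i) k
        positivity
      have hErup : ∀ᶠ n : ℕ in atTop, Er n ≤ 10 / (2 * (n:ℝ) - 1) := by
        rw [eventually_atTop]
        refine ⟨1, ?_⟩
        intro n hn
        obtain ⟨j, rfl⟩ : ∃ j, n = j + 1 := ⟨n - 1, by omega⟩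
        have h1 : (∑ i ∈ Finset.range (j+1-1), (m (i+1):ℝ) * (c (j+1-1-i)).coeff k)
            ≤ (auxT m j : ℝ) := by
          have e : j + 1 - 1 = j := rfl
          rw [e]
          have : (auxT m j : ℝ) = ∑ i ∈ Finset.range j, (m (i+1):ℝ) * (m (j-i) : ℝ) := by
            rw [auxT]; push_cast; rfl
          rw [this]
          apply Finset.sum_le_sum
          intro i hi
          apply mul_le_mul_of_nonneg_left ?_ (Nat.cast_nonneg _)
          exact hclem _ k
        have h2 : Er (j+1) ≤ (auxT m j : ℝ) / (m (j+1) : ℝ) :=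
          div_le_div_of_nonneg_right h1 (le_of_lt (hmRpos (j+1)))
        have h3 := auxT_div_le m hm0 hm j
        have e4 : 2 * ((j:ℝ)+1) - 1 = 2 * (j:ℝ) + 1 := by ring
        push_cast
        rw [e4]
        push_cast at h2
        linarith
      have hErtendsto : Tendsto Er atTop (nhds 0) :=
        tendsto_of_tendsto_of_tendsto_of_le_of_le' tendsto_const_nhds (const_div_lin 10)
          (Filter.Eventually.of_forall hErlo) hErup
      -- decomposition of uf
      have hdecomp : ∀ᶠ n : ℕ in atTop, uf n =
          (c n).coeff k / (m n : ℝ) + (if k = 0 then (1:ℝ) else 0) + Er n := by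
        rw [eventually_atTop]
        refine ⟨1, ?_⟩
        intro n hn
        obtain ⟨j, rfl⟩ : ∃ j, n = j + 1 := ⟨n - 1, by omega⟩
        have e1 : uf (j+1) = (∑ i ∈ Finset.range (j+2), (m i:ℝ) * (c (j+1-i)).coeff k)
            / (m (j+1) : ℝ) := rfl
        rw [e1, Finset.sum_range_succ, Finset.sum_range_succ']
        have e2 : j + 1 - (j + 1) = 0 := by omega
        rw [e2, hc0, Polynomial.coeff_one, hm0]
        have e3 : ∀ i, j + 1 - (i + 1) = j - i := fun i => by omega
        have e5 : (∑ i ∈ Finset.range j, (m (i+1):ℝ) * (c (j + 1 - (i+1))).coeff k)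
            = ∑ i ∈ Finset.range j, (m (i+1):ℝ) * (c (j - i)).coeff k := by
          apply Finset.sum_congr rfl
          intro i _
          rw [e3 i]
        rw [e5]
        have e6 : Er (j+1) = (∑ i ∈ Finset.range j, (m (i+1):ℝ) * (c (j - i)).coeff k)
            / (m (j+1) : ℝ) := rfl
        rw [e6]
        have hmj := hmRpos (j+1)
        simp only [Nat.sub_zero]
        field_simp
        ring
      -- limit of uf
      have hulim : Tendsto uf atTop (nhds (2 * L)) := by
        have hg : Tendsto (fun n => (c n).coeff k / (m n : ℝ) + (if k = 0 then (1:ℝ) else 0) + Er n)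
            atTop (nhds ((if k = 0 then (0:ℝ) else (2:ℝ) ^ (-(k:ℤ))) + (if k = 0 then (1:ℝ) else 0) + 0)) :=
          (ihk.add tendsto_const_nhds).add hErtendsto
        have hval : (if k = 0 then (0:ℝ) else (2:ℝ) ^ (-(k:ℤ))) + (if k = 0 then (1:ℝ) else 0) + 0
            = 2 * L := by
          rw [hLdef]
          rcases Nat.eq_zero_or_pos k with hk | hk
          · subst hk; norm_num
          · rw [if_neg (by omega), if_neg (by omega)]
            have : (-((k:ℤ)+1)) = (-(k:ℤ)) + (-1) := by ring
            rw [this, zpow_add₀ (by norm_num : (2:ℝ) ≠ 0), zpow_neg_one]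
            ring
        rw [hval] at hg
        exact hg.congr' (by filter_upwards [hdecomp] with n h using h.symm)
      -- the recurrence
      have hrec : ∀ n : ℕ, ((fun n => (c n).coeff (k+1) / (m n : ℝ)) (n+1)) * ((2 * (n:ℝ) + 1) + sf n)
          = (2 * (n:ℝ) + 1) * ((fun n => (c n).coeff (k+1) / (m n : ℝ)) n) + uf n := by
        intro n
        have hmn := hmRpos n
        have hmn1 := hmRpos (n+1)
        have e : (2 * (n:ℝ) + 1) + sf n = (m (n+1) : ℝ) / (m n : ℝ) := by
          simp only [hsf]; ring
        simp only [e]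
        have hcoeff := c_coeff_succ m c hc0 hc n k
        rw [huf, hcoeff]
        field_simp
        try ring
      exact ode_tendsto _ sf uf L hL
        (fun n => by have := hcnn n (k+1); positivity)
        (s_nonneg m hm0 hm) (s_tendsto m hm0 hm) hulim hrec
  constructor
  · intro k hk
    have := main k
    rw [if_neg (by omega)] at this
    exact this
  · have := main 0
    simpa using this
end

section
/- The mean number of root edges of a uniform random rooted map with n edges is asymptotic to (2/3)·n: lim_{n→∞} e_n′(1)/(n·m(n)) = 2/3, where e_n′ is the derivative of the polynomial e_n. -/
open Polynomial Filter

/-- The mean number of root edges of a uniform random rooted map with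
`n` edges is asymptotic to `(2/3)·n`: `lim_{n→∞} e_n′(1)/(n·m(n)) = 2/3`. -/
theorem root_edges_mean
    (m : ℕ → ℕ) (hm0 : m 0 = 1)
    (hm : ∀ n : ℕ, m (n + 1) =
      (∑ k ∈ Finset.range (n + 1), m k * m (n - k)) + (2 * (n + 1) - 1) * m n)
    (e : ℕ → Polynomial ℝ) (he0 : e 0 = 1)
    (he : ∀ n : ℕ, e (n + 1) =
      C (2 * ((n : ℝ) + 1) - 1) * X * e n +
        X * ∑ i ∈ Finset.range (n + 1), C ((m i : ℝ)) * e (n - i)) :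
    Tendsto (fun n : ℕ => (derivative (e n)).eval 1 / ((n : ℝ) * (m n : ℝ))) atTop
      (nhds (2 / 3)) := by
  set M : ℕ → ℝ := fun n => (m n : ℝ) with hMdef
  have hm1 : ∀ n, 1 ≤ m n := by
    intro n
    induction n with
    | zero => omega
    | succ k ih =>
      have h := hm k
      have h2 : 2 * (k+1) - 1 = 2*k+1 := by omega
      rw [h2] at h
      nlinarith [Finset.sum_nonneg (fun i (_ : i ∈ Finset.range (k+1)) => Nat.zero_le (m i * m (k - i)))]
  have hMpos : ∀ n, (0:ℝ) < M n := by
    intro n; simp only [hMdef]; exact_mod_cast hm1 n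
  have hM0 : M 0 = 1 := by simp [hMdef, hm0]
  have hmR : ∀ n : ℕ, M (n+1) = (∑ i ∈ Finset.range (n+1), M i * M (n-i)) + (2*(n:ℝ)+1) * M n := by
    intro n
    have h := hm n
    have h2 : 2 * (n+1) - 1 = 2*n+1 := by omega
    rw [h2] at h
    simp only [hMdef]
    push_cast [h]
    ring
  -- eval at 1
  have E : ∀ n, (e n).eval 1 = M n := by
    intro n
    induction n using Nat.strong_induction_on with
    | _ n ih =>
      match n with
      | 0 => simp [he0, hMdef, hm0]
      | Nat.succ k =>
        rw [he k]
        simp only [eval_add, eval_mul, eval_C, eval_X, eval_finset_sum, mul_one, one_mul]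
        have hs : ∀ i ∈ Finset.range (k+1), (m i : ℝ) * (e (k - i)).eval 1 = M i * M (k - i) := by
          intro i hi
          rw [ih (k - i) (by omega)]
        rw [Finset.sum_congr rfl hs, ih k (by omega), hmR k]
        ring
  -- derivative at 1
  set d : ℕ → ℝ := fun n => (derivative (e n)).eval 1 with hddef
  have hd0 : d 0 = 0 := by simp [hddef, he0]
  have hd : ∀ n, d (n+1) = (2*(n:ℝ)+1) * (M n + d n)
      + ∑ i ∈ Finset.range (n+1), (M i * M (n-i) + M i * d (n-i)) := by
    intro n
    simp only [hddef]
    rw [he n]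
    rw [derivative_add, mul_assoc, derivative_C_mul, derivative_mul, derivative_X,
      derivative_mul, derivative_X, derivative_sum]
    simp only [eval_add, eval_mul, eval_C, eval_X, eval_finset_sum, one_mul, mul_one,
      derivative_C_mul]
    rw [E n]
    have hs : ∀ i ∈ Finset.range (n+1), (m i : ℝ) * (e (n - i)).eval 1 = M i * M (n - i) := by
      intro i _; rw [E (n - i)]
    rw [Finset.sum_congr rfl hs, Finset.sum_add_distrib]
    simp only [hMdef]
    ring
  -- closed form : 3 d n = M (n+1) - 2 M n
  have D : ∀ n, 3 * d n = M (n+1) - 2 * M n := by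
    intro n
    induction n using Nat.strong_induction_on with
    | _ n ih =>
      match n with
      | 0 =>
        have h1 := hmR 0
        simp [hM0] at h1
        rw [hd0, h1, hM0]
        norm_num
      | Nat.succ k =>
        rw [hd k]
        have hdk : d k = (M (k+1) - 2*M k)/3 := by
          have := ih k (by omega); linarith
        have hS1 : ∑ i ∈ Finset.range (k+1), (M i * M (k-i) + M i * d (k-i))
            = ∑ i ∈ Finset.range (k+1),
                (M i * M (k-i) + M i * ((M ((k-i)+1) - 2*M (k-i))/3)) := by
          apply Finset.sum_congr rfl
          intro i hi
          have h3 := ih (k - i) (by omega)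
          have : d (k - i) = (M ((k-i)+1) - 2*M (k-i))/3 := by linarith
          rw [this]
        rw [hS1]
        have hS2 : ∑ i ∈ Finset.range (k+1),
              (M i * M (k-i) + M i * ((M ((k-i)+1) - 2*M (k-i))/3))
            = (1/3) * (∑ i ∈ Finset.range (k+1), M i * M (k-i))
              + (1/3) * (∑ i ∈ Finset.range (k+1), M i * M ((k-i)+1)) := by
          rw [Finset.mul_sum, Finset.mul_sum, ← Finset.sum_add_distrib]
          apply Finset.sum_congr rfl
          intro i _
          ring
        rw [hS2]
        -- rewrite the second sum's index: (k-i)+1 = k+1-i on range (k+1)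
        have hS3 : ∑ i ∈ Finset.range (k+1), M i * M ((k-i)+1)
            = ∑ i ∈ Finset.range (k+1), M i * M (k+1-i) := by
          apply Finset.sum_congr rfl
          intro i hi
          have : i ≤ k := Nat.lt_succ_iff.mp (Finset.mem_range.mp hi)
          congr 2
          omega
        rw [hS3]
        have hA := hmR k
        have hA2 := hmR (k+1)
        push_cast at hA2
        rw [Finset.sum_range_succ] at hA2
        simp only [Nat.sub_self] at hA2
        rw [hM0] at hA2
        rw [hdk]
        push_cast
        linear_combination (-1 : ℝ) * hA - hA2
  -- T n := M (n+1) - (2n+3) M n ; show 0 ≤ T (n+1) and T n ≤ M n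
  set T : ℕ → ℝ := fun n => M (n+1) - (2*(n:ℝ)+3) * M n with hTdef
  -- numeric values
  have v1 : m 1 = 2 := by
    have h := hm 0; simpa [hm0] using h
  have v2 : m 2 = 10 := by
    have h := hm 1; simp [Finset.sum_range_succ, hm0, v1] at h; omega
  have v3 : m 3 = 74 := by
    have h := hm 2; simp [Finset.sum_range_succ, hm0, v1, v2] at h; omega
  have v4 : m 4 = 706 := by
    have h := hm 3; simp [Finset.sum_range_succ, hm0, v1, v2, v3] at h; omega
  have v5 : m 5 = 8162 := by
    have h := hm 4; simp [Finset.sum_range_succ, hm0, v1, v2, v3, v4] at h; omega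
  have v6 : m 6 = 110410 := by
    have h := hm 5; simp [Finset.sum_range_succ, hm0, v1, v2, v3, v4, v5] at h; omega
  -- identity: T (k+1) = ∑_{i<k} M (i+1) * M (k-i)
  have I1 : ∀ k : ℕ, T (k+1) = ∑ i ∈ Finset.range k, M (i+1) * M (k-i) := by
    intro k
    have h := hmR (k+1)
    rw [Finset.sum_range_succ, Finset.sum_range_succ'] at h
    simp only [Nat.add_sub_add_right, Nat.sub_self, Nat.sub_zero] at h
    rw [hM0] at h
    push_cast at h
    simp only [hTdef]
    push_cast
    linarith
  have Tpos : ∀ k : ℕ, 0 ≤ T (k+1) := by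
    intro k
    rw [I1 k]
    apply Finset.sum_nonneg
    intro i _
    exact mul_nonneg (hMpos _).le (hMpos _).le
  -- symmetrized weighted sum
  have symm : ∀ k : ℕ, ∑ i ∈ Finset.range (k+1), (2*(i:ℝ)+4) * (M i * M (k-i))
      = ((k:ℝ)+4) * ∑ i ∈ Finset.range (k+1), M i * M (k-i) := by
    intro k
    have hrefl : ∑ i ∈ Finset.range (k+1), (2*(i:ℝ)+4) * (M i * M (k-i))
        = ∑ i ∈ Finset.range (k+1), (2*((k:ℝ)-(i:ℝ))+4) * (M (k-i) * M i) := by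
      rw [← Finset.sum_range_reflect (fun i => (2*(i:ℝ)+4) * (M i * M (k-i))) (k+1)]
      apply Finset.sum_congr rfl
      intro j hj
      have hj' : j ≤ k := Nat.lt_succ_iff.mp (Finset.mem_range.mp hj)
      have e1 : k + 1 - 1 - j = k - j := by omega
      have e2 : k - (k - j) = j := by omega
      have e3 : ((k - j : ℕ) : ℝ) = (k:ℝ) - (j:ℝ) := by
        push_cast [Nat.cast_sub hj']; ring
      rw [e1, e2, e3]
    have h2 : (∑ i ∈ Finset.range (k+1), (2*(i:ℝ)+4) * (M i * M (k-i)))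
        + (∑ i ∈ Finset.range (k+1), (2*(i:ℝ)+4) * (M i * M (k-i)))
        = (2*(k:ℝ)+8) * ∑ i ∈ Finset.range (k+1), M i * M (k-i) := by
      nth_rewrite 2 [hrefl]
      rw [← Finset.sum_add_distrib, Finset.mul_sum]
      apply Finset.sum_congr rfl
      intro j _
      ring
    linarith
  -- T n ≤ M n
  have TB : ∀ n : ℕ, T n ≤ M n := by
    intro n
    induction n using Nat.strong_induction_on with
    | _ n ih =>
      match n with
      | 0 => simp only [hTdef, hMdef]; norm_num [v1, hm0]
      | 1 => simp only [hTdef, hMdef]; norm_num [v1, v2]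
      | 2 => simp only [hTdef, hMdef]; norm_num [v1, v2, v3]
      | 3 => simp only [hTdef, hMdef]; norm_num [v2, v3, v4]
      | 4 => simp only [hTdef, hMdef]; norm_num [v3, v4, v5]
      | 5 => simp only [hTdef, hMdef]; norm_num [v4, v5, v6]
      | (k+6) =>
        have hk5 : 5 ≤ k + 5 := by omega
        rw [I1 (k+5)]
        have step1 : ∑ i ∈ Finset.range (k+5), M (i+1) * M (k+5-i)
            ≤ ∑ i ∈ Finset.range (k+5), (2*(i:ℝ)+4) * (M i * M (k+5-i)) := by
          apply Finset.sum_le_sum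
          intro i hi
          have hik : i < k+5 := Finset.mem_range.mp hi
          have hT : T i ≤ M i := ih i (by omega)
          have hMi : M (i+1) ≤ (2*(i:ℝ)+4) * M i := by
            have : T i = M (i+1) - (2*(i:ℝ)+3) * M i := by simp [hTdef]
            linarith
          have := mul_le_mul_of_nonneg_right hMi (hMpos (k+5-i)).le
          linarith [this]
        have step2 : ∑ i ∈ Finset.range (k+5), (2*(i:ℝ)+4) * (M i * M (k+5-i))
            = (((k+5:ℕ):ℝ)+4) * (∑ i ∈ Finset.range (k+5+1), M i * M (k+5-i))
              - (2*((k+5:ℕ):ℝ)+4) * M (k+5) := by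
          have h := symm (k+5)
          rw [Finset.sum_range_succ] at h
          simp only [Nat.sub_self, mul_one] at h
          rw [hM0] at h
          linarith
        have hSr : ∑ i ∈ Finset.range (k+5+1), M i * M (k+5-i) = T (k+5) + 2 * M (k+5) := by
          have h := hmR (k+5)
          simp only [hTdef]
          push_cast at h ⊢
          linarith
        have hTk : T (k+5) ≤ M (k+5) := ih (k+5) (by omega)
        have hTkpos : 0 ≤ T (k+5) := Tpos (k+4)
        have hMk1 : M (k+5+1) = T (k+5) + (2*((k+5:ℕ):ℝ)+3) * M (k+5) := by
          simp only [hTdef]; ring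
        have hkR : (5:ℝ) ≤ ((k+5:ℕ):ℝ) := by push_cast; linarith [Nat.cast_nonneg (α := ℝ) k]
        calc ∑ i ∈ Finset.range (k+5), M (i+1) * M (k+5-i)
            ≤ (((k+5:ℕ):ℝ)+4) * (T (k+5) + 2 * M (k+5)) - (2*((k+5:ℕ):ℝ)+4) * M (k+5) := by
              rw [← hSr]; linarith [step1, step2]
          _ ≤ M (k+5+1) := by
              rw [hMk1]
              have := hMpos (k+5)
              nlinarith
  -- final limit via sandwich
  have hb : ∀ n : ℕ, 1 ≤ n → (2*(n:ℝ)+1) * M n ≤ 3 * d n ∧ 3 * d n ≤ (2*(n:ℝ)+2) * M n := by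
    intro n hn
    have hD := D n
    have hMn1 : M (n+1) = T n + (2*(n:ℝ)+3) * M n := by simp only [hTdef]; ring
    have hTn : T n ≤ M n := TB n
    have hTnpos : 0 ≤ T n := by
      obtain ⟨k', rfl⟩ : ∃ k', n = k' + 1 := ⟨n - 1, by omega⟩
      exact Tpos k'
    constructor <;> [skip; skip] <;> linarith
  have hupperlim : Tendsto (fun n : ℕ => 2/3 + 2/(3*(n:ℝ))) atTop (nhds (2/3)) := by
    have h0 : Tendsto (fun n : ℕ => 2/(3*(n:ℝ))) atTop (nhds 0) := by
      have h1 : Tendsto (fun n : ℕ => (2/3 : ℝ) * (1/(n:ℝ))) atTop (nhds ((2/3 : ℝ) * 0)) :=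
        Tendsto.const_mul _ tendsto_one_div_atTop_nhds_zero_nat
      have he2 : (fun n : ℕ => (2/3 : ℝ) * (1/(n:ℝ))) = fun n : ℕ => 2/(3*(n:ℝ)) := by
        funext n; ring
      rw [he2, mul_zero] at h1
      exact h1
    simpa using tendsto_const_nhds.add h0
  show Tendsto (fun n : ℕ => d n / ((n:ℝ) * M n)) atTop (nhds (2/3))
  apply tendsto_of_tendsto_of_tendsto_of_le_of_le' tendsto_const_nhds hupperlim
  · filter_upwards [eventually_ge_atTop 1] with n hn
    have h := (hb n hn).1
    have hnp : (0:ℝ) < (n:ℝ) := by exact_mod_cast hn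
    have hpos : (0:ℝ) < (n:ℝ) * M n := mul_pos hnp (hMpos n)
    rw [le_div_iff₀ hpos]
    nlinarith [hMpos n]
  · filter_upwards [eventually_ge_atTop 1] with n hn
    have h := (hb n hn).2
    have hnp : (0:ℝ) < (n:ℝ) := by exact_mod_cast hn
    have hpos : (0:ℝ) < (n:ℝ) * M n := mul_pos hnp (hMpos n)
    rw [div_le_iff₀ hpos]
    have heq : (2/3 + 2/(3*(n:ℝ))) * ((n:ℝ) * M n) = (2*(n:ℝ)+2)/3 * M n := by
      field_simp
    rw [heq]
    linarith
end

section
/- The root vertex degree D_n of a uniform random rooted map with n edges, rescaled by n, converges in distribution to the uniform law on [0,2]: for every t ∈ [0,2], lim_{n→∞} (Σ_{k=0}^{⌊tn⌋} d_{n,k}) / m(n) = t/2. -/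
open Polynomial Filter Finset

namespace RDUL

def df : ℕ → ℕ
  | 0 => 1
  | s+1 => (2*s+1) * df s

lemma df_pos : ∀ s, 0 < df s
  | 0 => one_pos
  | s+1 => Nat.mul_pos (by omega) (df_pos s)

lemma df_zero : df 0 = 1 := rfl

lemma df_one : df 1 = 1 := rfl

lemma df_succ (s : ℕ) : df (s+1) = (2*s+1) * df s := rfl

def qq (m : ℕ → ℕ) (n i : ℕ) : ℕ := ∑ s ∈ Finset.range i, m (n - 1 - s) * df s

def Hm (m : ℕ → ℕ) : Prop :=
  ∀ n : ℕ, m (n + 1) = (∑ k ∈ Finset.range (n + 1), m k * m (n - k)) + (2 * (n + 1) - 1) * m n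

/-- triangle sum swap -/
lemma tri (f : ℕ → ℕ → ℕ) (n : ℕ) :
    ∑ k ∈ range n, ∑ j ∈ range (n - k), f k j
      = ∑ j ∈ range n, ∑ k ∈ range (n - j), f k j := by
  have key : ∀ g : ℕ → ℕ → ℕ, ∑ k ∈ range n, ∑ j ∈ range (n - k), g k j
      = ∑ k ∈ range n, ∑ j ∈ range n, if k + j < n then g k j else 0 := by
    intro g
    refine Finset.sum_congr rfl fun k hk => ?_
    rw [← Finset.sum_filter]
    refine (Finset.sum_congr ?_ fun _ _ => rfl)
    ext j
    simp only [Finset.mem_filter, Finset.mem_range]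
    omega
  rw [key f, key (fun j k => f k j), Finset.sum_comm]
  refine Finset.sum_congr rfl fun k _ => Finset.sum_congr rfl fun j _ => ?_
  simp only [add_comm]

lemma P12 (m : ℕ → ℕ) (hm0 : m 0 = 1) (hm : Hm m) :
    ∀ n, (∑ j ∈ range (n+1), m j * df (n - j) = df (n+1)) ∧
      (∑ j ∈ range (n+1), (2*j+2) * (m j * df (n - j)) = m (n+1)) := by
  intro n
  induction n using Nat.strong_induction_on with
  | _ n ih =>
    match n with
    | 0 =>
      constructor
      · simp [df, hm0]
      · have h1 := hm 0
        simp only [zero_add, Finset.sum_range_one, Nat.sub_zero] at h1 ⊢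
        simp [df, hm0, h1]
    | (N+1) =>
      have h1 := (ih N (by omega)).1
      have h2 := (ih N (by omega)).2
      have hdf2 : df (N+2) = (2*N+3) * df (N+1) := by
        rw [show 2*N+3 = 2*(N+1)+1 by ring]
        exact df_succ (N+1)
      have e1 : (∑ j ∈ range (N+1), m j * df (N+1-j))
          + (∑ j ∈ range (N+1), (2*j+2)*(m j * df (N-j)))
          = ∑ j ∈ range (N+1), (2*N+3) * (m j * df (N-j)) := by
        rw [← Finset.sum_add_distrib]
        refine Finset.sum_congr rfl fun j hj => ?_
        have hj' : j ≤ N := by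
          have := Finset.mem_range.mp hj; omega
        have hNj : N+1-j = (N-j)+1 := by omega
        rw [hNj, df_succ]
        have hc : 2*(N-j)+1 + (2*j+2) = 2*N+3 := by omega
        calc m j * ((2*(N-j)+1) * df (N-j)) + (2*j+2)*(m j * df (N-j))
            = (2*(N-j)+1 + (2*j+2)) * (m j * df (N-j)) := by ring
          _ = (2*N+3) * (m j * df (N-j)) := by rw [hc]
      rw [h2, ← Finset.mul_sum, h1] at e1
      constructor
      · rw [Finset.sum_range_succ]
        simp only [Nat.sub_self, df_zero, mul_one]
        rw [hdf2]
        exact e1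
      · -- P2 at N+1
        have hmN := hm (N+1)
        -- convolution rewrite
        have conv : ∑ k ∈ range (N+1), m k * m (N+1-k)
            = ∑ j ∈ range (N+1), (2*j+2) * (m j * df (N+1-j)) := by
          have step1 : ∀ k ∈ range (N+1),
              m k * m (N+1-k) = ∑ j ∈ range (N+1-k), m k * ((2*j+2) * (m j * df (N-k-j))) := by
            intro k hk
            have hk' : k ≤ N := by have := Finset.mem_range.mp hk; omega
            have h := (ih (N-k) (by omega)).2
            have hidx : N+1-k = (N-k)+1 := by omega
            rw [hidx, ← h, Finset.mul_sum]
          rw [Finset.sum_congr rfl step1,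
            tri (fun k j => m k * ((2*j+2) * (m j * df (N-k-j)))) (N+1)]
          refine Finset.sum_congr rfl fun j hj => ?_
          have hj' : j ≤ N := by have := Finset.mem_range.mp hj; omega
          have hinner : ∑ k ∈ range (N+1-j), m k * ((2*j+2) * (m j * df (N-k-j)))
              = (2*j+2) * (m j * (∑ k ∈ range (N+1-j), m k * df ((N-j)-k))) := by
            rw [Finset.mul_sum, Finset.mul_sum]
            refine Finset.sum_congr rfl fun k hk => ?_
            have : N-k-j = (N-j)-k := by omega
            rw [this]; ring
          rw [hinner]
          have hr : N+1-j = (N-j)+1 := by omega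
          have h := (ih (N-j) (by omega)).1
          rw [hr, h]
        rw [Finset.sum_range_succ] at hmN
        rw [conv] at hmN
        rw [hmN, Finset.sum_range_succ]
        simp only [Nat.sub_self, df_zero, hm0, mul_one]
        have hc : 2*(N+1+1)-1 = 2*N+3 := by omega
        rw [hc]
        ring

lemma qdiag (m : ℕ → ℕ) (hm0 : m 0 = 1) (hm : Hm m) (n : ℕ) (hn : 1 ≤ n) :
    qq m n n = df n := by
  obtain ⟨N, rfl⟩ : ∃ N, n = N + 1 := ⟨n - 1, by omega⟩
  have h1 := (P12 m hm0 hm N).1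
  unfold qq
  have refl : ∑ s ∈ range (N+1), m (N+1-1-s) * df s
      = ∑ j ∈ range (N+1), m j * df (N - j) := by
    rw [← Finset.sum_range_reflect (fun j => m j * df (N - j)) (N+1)]
    refine Finset.sum_congr rfl fun s hs => ?_
    have hs' : s ≤ N := by have := Finset.mem_range.mp hs; omega
    have e1 : N + 1 - 1 - s = N - s := by omega
    have e2 : N - (N - s) = s := by omega
    rw [e1, e2]
  rw [refl, h1]

lemma qq_succ (m : ℕ → ℕ) (n i : ℕ) :
    qq m n (i+1) = qq m n i + m (n - 1 - i) * df i := Finset.sum_range_succ _ _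

lemma qq_one (m : ℕ → ℕ) (n : ℕ) : qq m n 1 = m (n - 1) := by
  simp [qq, df_zero]

/-- Identity I1 -/
lemma I1 (m : ℕ → ℕ) (hm0 : m 0 = 1) (hm : Hm m) :
    ∀ a c, 1 ≤ a → qq m (a+c+1) (a+1)
      = 2*(a+c) * qq m (a+c) a + ∑ i ∈ range (c+1), m i * qq m (a+c-i) a := by
  intro a
  induction a using Nat.strong_induction_on with
  | _ a ih =>
    match a with
    | 0 => intro c h; exact absurd h (by omega)
    | 1 =>
      intro c _
      have hmc : m (c+1) = (∑ k ∈ range (c+1), m k * m (c-k)) + (2*c+1) * m c := by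
        have h := hm c
        have h21 : 2*(c+1)-1 = 2*c+1 := by omega
        rw [h21] at h
        exact h
      have e1 : qq m (1+c+1) 2 = m (c+1) + m c := by
        rw [qq_succ, qq_one]
        have i1 : 1+c+1-1 = c+1 := by omega
        have i2 : 1+c+1-1-1 = c := by omega
        rw [i2, i1, df_one]
        ring
      have e2 : ∀ i ∈ range (c+1), m i * qq m (1+c-i) 1 = m i * m (c - i) := by
        intro i hi
        have hi' : i ≤ c := by have := Finset.mem_range.mp hi; omega
        rw [qq_one]
        have : 1+c-i-1 = c - i := by omega
        rw [this]
      rw [e1, Finset.sum_congr rfl e2, qq_one]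
      have h2 : (1:ℕ)+c-1 = c := by omega
      rw [h2, hmc]
      ring
    | (b+2) =>
      intro c _
      have IH := ih (b+1) (by omega) (c+1) (by omega)
      -- normalize indices
      have g1 : b+2+c+1 = b+c+3 := by omega
      have g2 : b+2+c = b+c+2 := by omega
      have g3 : b+1+(c+1)+1 = b+c+3 := by omega
      have g4 : b+1+(c+1) = b+c+2 := by omega
      rw [g1, g2]
      rw [g3, g4] at IH
      -- IH : qq m (b+c+3) (b+2) = 2*(b+c+2) * qq m (b+c+2) (b+1)
      --        + ∑ i ∈ range (c+2), m i * qq m (b+c+2-i) (b+1)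
      have hS2 : ∑ i ∈ range (c+2), m i * qq m (b+c+2-i) (b+1)
          = (∑ i ∈ range (c+1), m i * qq m (b+c+2-i) (b+1)) + m (c+1) * df (b+1) := by
        rw [Finset.sum_range_succ]
        have idx : b+c+2-(c+1) = b+1 := by omega
        rw [idx, qdiag m hm0 hm (b+1) (by omega)]
      rw [hS2] at IH
      have hq1 : qq m (b+c+3) (b+3) = qq m (b+c+3) (b+2) + m c * df (b+2) := by
        have idx : b+c+3-1-(b+2) = c := by omega
        rw [qq_succ, idx]
      have hq2 : qq m (b+c+2) (b+2) = qq m (b+c+2) (b+1) + m c * df (b+1) := by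
        have idx : b+c+2-1-(b+1) = c := by omega
        rw [qq_succ, idx]
      have hsum : ∑ i ∈ range (c+1), m i * qq m (b+c+2-i) (b+2)
          = (∑ i ∈ range (c+1), m i * qq m (b+c+2-i) (b+1))
            + (∑ i ∈ range (c+1), m i * m (c-i)) * df (b+1) := by
        rw [Finset.sum_mul, ← Finset.sum_add_distrib]
        refine Finset.sum_congr rfl fun i hi => ?_
        have hi' : i ≤ c := by have := Finset.mem_range.mp hi; omega
        have idx : b+c+2-i-1-(b+1) = c - i := by omega
        rw [qq_succ, idx]
        ring
      have hmc : m (c+1) = (∑ k ∈ range (c+1), m k * m (c-k)) + (2*c+1) * m c := by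
        have h := hm c
        have h21 : 2*(c+1)-1 = 2*c+1 := by omega
        rw [h21] at h
        exact h
      have hdf : df (b+2) = (2*b+3) * df (b+1) := by
        rw [show 2*b+3 = 2*(b+1)+1 by ring]
        exact df_succ (b+1)
      rw [hq1, IH, hq2, hsum, hdf, hmc]
      ring

/-- Identity I2 -/
lemma I2 (m : ℕ → ℕ) (hm0 : m 0 = 1) (hm : Hm m) :
    ∀ a c, qq m (a+c+2) (a+1)
      = (2*a+1) * qq m (a+c+1) a + (2*c+1) * qq m (a+c+1) (a+1)
        + ∑ i ∈ range (c+1), m i * qq m (a+c+1-i) (a+1) := by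
  intro a
  induction a with
  | zero =>
    intro c
    have hmc : m (c+1) = (∑ k ∈ range (c+1), m k * m (c-k)) + (2*c+1) * m c := by
      have h := hm c
      have h21 : 2*(c+1)-1 = 2*c+1 := by omega
      rw [h21] at h
      exact h
    have e0 : qq m (0+c+1) 0 = 0 := by simp [qq]
    have e1 : qq m (0+c+2) 1 = m (c+1) := by
      rw [qq_one]
      have : 0+c+2-1 = c+1 := by omega
      rw [this]
    have e2 : qq m (0+c+1) 1 = m c := by
      rw [qq_one]
      have : 0+c+1-1 = c := by omega
      rw [this]
    have e3 : ∀ i ∈ range (c+1), m i * qq m (0+c+1-i) 1 = m i * m (c-i) := by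
      intro i hi
      have hi' : i ≤ c := by have := Finset.mem_range.mp hi; omega
      rw [qq_one]
      have : 0+c+1-i-1 = c-i := by omega
      rw [this]
    rw [e0, e1, e2, Finset.sum_congr rfl e3, hmc]
    ring
  | succ b ihb =>
    intro c
    have IH := ihb (c+1)
    have g1 : b+1+c+2 = b+c+3 := by omega
    have g2 : b+1+c+1 = b+c+2 := by omega
    have g3 : b+(c+1)+2 = b+c+3 := by omega
    have g4 : b+(c+1)+1 = b+c+2 := by omega
    rw [g1, g2]
    rw [g3, g4] at IH
    -- IH : qq m (b+c+3) (b+1) = (2*b+1) * qq m (b+c+2) b + (2*(c+1)+1) * qq m (b+c+2) (b+1)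
    --        + ∑ i ∈ range (c+2), m i * qq m (b+c+2-i) (b+1)
    have hS2 : ∑ i ∈ range (c+2), m i * qq m (b+c+2-i) (b+1)
        = (∑ i ∈ range (c+1), m i * qq m (b+c+2-i) (b+1)) + m (c+1) * df (b+1) := by
      rw [Finset.sum_range_succ]
      have idx : b+c+2-(c+1) = b+1 := by omega
      rw [idx, qdiag m hm0 hm (b+1) (by omega)]
    rw [hS2] at IH
    have hq1 : qq m (b+c+3) (b+2) = qq m (b+c+3) (b+1) + m (c+1) * df (b+1) := by
      have idx : b+c+3-1-(b+1) = c+1 := by omega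
      rw [qq_succ, idx]
    have hq2 : qq m (b+c+2) (b+2) = qq m (b+c+2) (b+1) + m c * df (b+1) := by
      have idx : b+c+2-1-(b+1) = c := by omega
      rw [qq_succ, idx]
    have hq3 : qq m (b+c+2) (b+1) = qq m (b+c+2) b + m (c+1) * df b := by
      have idx : b+c+2-1-b = c+1 := by omega
      rw [qq_succ, idx]
    have hsum : ∑ i ∈ range (c+1), m i * qq m (b+c+2-i) (b+2)
        = (∑ i ∈ range (c+1), m i * qq m (b+c+2-i) (b+1))
          + (∑ i ∈ range (c+1), m i * m (c-i)) * df (b+1) := by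
      rw [Finset.sum_mul, ← Finset.sum_add_distrib]
      refine Finset.sum_congr rfl fun i hi => ?_
      have hi' : i ≤ c := by have := Finset.mem_range.mp hi; omega
      have idx : b+c+2-i-1-(b+1) = c-i := by omega
      rw [qq_succ, idx]
      ring
    have hmc : m (c+1) = (∑ k ∈ range (c+1), m k * m (c-k)) + (2*c+1) * m c := by
      have h := hm c
      have h21 : 2*(c+1)-1 = 2*c+1 := by omega
      rw [h21] at h
      exact h
    have hdf : df (b+1) = (2*b+1) * df b := df_succ b
    rw [hq1, IH, hq2, hsum]
    -- both sides in terms of qq m (b+c+2) (b+1), qq m (b+c+2) b, sums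
    rw [hq3, hmc, hdf]
    ring

lemma qq_mono (m : ℕ → ℕ) (n : ℕ) {i j : ℕ} (h : i ≤ j) : qq m n i ≤ qq m n j :=
  Finset.sum_le_sum_of_subset (Finset.range_subset_range.2 h)

lemma mpos (m : ℕ → ℕ) (hm0 : m 0 = 1) (hm : Hm m) : ∀ n, 0 < m n := by
  intro n
  induction n with
  | zero => omega
  | succ k ihk =>
    rw [hm k]
    have h1 : 0 < (2*(k+1)-1) * m k := Nat.mul_pos (by omega) ihk
    omega

lemma m_one (m : ℕ → ℕ) (hm0 : m 0 = 1) (hm : Hm m) : m 1 = 2 := by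
  have h := hm 0
  simp [hm0] at h
  omega

/-- lower ratio bound -/
lemma Lrat (m : ℕ → ℕ) (hm0 : m 0 = 1) (hm : Hm m) (n : ℕ) (hn : 1 ≤ n) :
    (2*n+3) * m n ≤ m (n+1) := by
  rw [hm n]
  have hsub : ({0, n} : Finset ℕ) ⊆ range (n+1) := by
    intro x hx
    simp only [Finset.mem_insert, Finset.mem_singleton] at hx
    rcases hx with rfl | rfl <;> simp [Finset.mem_range] <;> omega
  have hpair : ∑ k ∈ ({0, n} : Finset ℕ), m k * m (n-k) = 2 * m n := by
    rw [Finset.sum_pair (by omega : (0:ℕ) ≠ n)]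
    simp [hm0]
    omega
  have h2 : 2 * m n ≤ ∑ k ∈ range (n+1), m k * m (n-k) := by
    rw [← hpair]
    exact Finset.sum_le_sum_of_subset hsub
  have h3 : 2*(n+1)-1 = 2*n+1 := by omega
  rw [h3]
  calc (2*n+3) * m n = 2 * m n + (2*n+1) * m n := by ring
    _ ≤ _ := by omega

/-- iterated lower bound: df (a+1) * m (a+b) ≥ df (a+b+1) * m a -/
lemma Ldf (m : ℕ → ℕ) (hm0 : m 0 = 1) (hm : Hm m) (a : ℕ) (ha : 1 ≤ a) :
    ∀ b, df (a+b+1) * m a ≤ df (a+1) * m (a+b) := by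
  intro b
  induction b with
  | zero => simp
  | succ b ihb =>
    have h1 : (2*(a+b)+3) * m (a+b) ≤ m (a+b+1) := Lrat m hm0 hm (a+b) (by omega)
    have hdf : df (a+(b+1)+1) = (2*(a+b)+3) * df (a+b+1) := by
      rw [show a+(b+1)+1 = (a+b+1)+1 by omega, df_succ]
      ring_nf
    rw [hdf]
    calc (2*(a+b)+3) * df (a+b+1) * m a
        ≤ (2*(a+b)+3) * (df (a+1) * m (a+b)) := by
          rw [mul_assoc]
          exact Nat.mul_le_mul_left _ ihb
      _ = df (a+1) * ((2*(a+b)+3) * m (a+b)) := by ring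
      _ ≤ df (a+1) * m (a+b+1) := Nat.mul_le_mul_left _ h1
      _ = df (a+1) * m (a+(b+1)) := by rw [show a+(b+1) = a+b+1 by omega]

lemma dfmul_aux : ∀ a, 1 ≤ a → ∀ b, 1 ≤ b → a ≤ b + 1 →
    df (a+1) * df (b+1) ≤ 3 * df (a+b) := by
  intro a
  induction a with
  | zero => omega
  | succ a' iha =>
    intro _ b hb hab
    match a', iha with
    | 0, _ =>
      have : df 2 = 3 := rfl
      rw [this]
      have : (0:ℕ)+1+b = b+1 := by omega
      rw [this]
    | (a''+1), iha =>
      set A := a''+1 with hA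
      -- a = A+1, A ≥ 1, A+1 ≤ b+1 so A ≤ b
      have hAb : A ≤ b := by omega
      have step : df (A+2) * df (b+1) ≤ df (A+1) * df (b+2) := by
        rw [show A+2 = (A+1)+1 by omega, df_succ, df_succ (b+1)]
        calc (2*(A+1)+1) * df (A+1) * df (b+1)
            ≤ (2*(b+1)+1) * df (A+1) * df (b+1) := by
              have : 2*(A+1)+1 ≤ 2*(b+1)+1 := by omega
              exact Nat.mul_le_mul_right _ (Nat.mul_le_mul_right _ this)
          _ = df (A+1) * ((2*(b+1)+1) * df (b+1)) := by ring
          _ = (2*(b+1)+1) * df (b+1) * df (A+1) := by ring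
          _ = df (A+1) * ((2*(b+1)+1) * df (b+1)) := by ring
      calc df (A+1+1) * df (b+1) ≤ df (A+1) * df (b+2) := step
        _ = df (A+1) * df ((b+1)+1) := by rw [show b+2 = (b+1)+1 by omega]
        _ ≤ 3 * df (A+(b+1)) := iha (by omega) (b+1) (by omega) (by omega)
        _ = 3 * df (A+1+b) := by rw [show A+(b+1) = A+1+b by omega]

lemma dfmul (a b : ℕ) (ha : 1 ≤ a) (hb : 1 ≤ b) :
    df (a+1) * df (b+1) ≤ 3 * df (a+b) := by
  rcases le_or_gt a (b+1) with h | h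
  · exact dfmul_aux a ha b hb h
  · have := dfmul_aux b hb a ha (by omega)
    calc df (a+1) * df (b+1) = df (b+1) * df (a+1) := by ring
      _ ≤ 3 * df (b+a) := this
      _ = 3 * df (a+b) := by rw [Nat.add_comm]

/-- tail bound : ∑_{i<N} m (N-1-i) * df (i+1) ≤ 5 * m (N-1) for N ≥ 1 -/
lemma TB (m : ℕ → ℕ) (hm0 : m 0 = 1) (hm : Hm m) (N : ℕ) (hN : 1 ≤ N) :
    ∑ i ∈ range N, m (N-1-i) * df (i+1) ≤ 5 * m (N-1) := by
  match N, hN with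
  | 1, _ => simp [df_one, hm0]
  | (N'+2), _ =>
    set N := N'+2 with hNdef
    have hN2 : 2 ≤ N := by omega
    -- top term : df N ≤ 2 * m (N-1)
    have htop : m (N-1-(N-1)) * df (N-1+1) ≤ 2 * m (N-1) := by
      have h1 : df (1+(N-2)+1) * m 1 ≤ df (1+1) * m (1+(N-2)) := Ldf m hm0 hm 1 le_rfl (N-2)
      rw [m_one m hm0 hm, show (1:ℕ)+(N-2)+1 = N by omega, show (1:ℕ)+(N-2) = N-1 by omega] at h1
      have h2 : df 2 = 3 := rfl
      rw [h2] at h1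
      have h3 : N-1-(N-1) = 0 := by omega
      rw [h3, hm0, show N-1+1 = N by omega]
      omega
    -- middle terms
    have hmid : ∀ i, i < N' →
        (2*N-1) * (m (N-1-(i+1)) * df (i+2)) ≤ 3 * m (N-1) := by
      intro i hiN
      have hi1 : 1 ≤ i+1 := by omega
      set j := N-1-(i+1) with hj
      have hj1 : 1 ≤ j := by omega
      have hij : (i+1) + j = N-1 := by omega
      have h1 : df N * m j ≤ df (j+1) * m (N-1) := by
        have := Ldf m hm0 hm j hj1 (N-1-j)
        rw [show j+(N-1-j)+1 = N by omega, show j+(N-1-j) = N-1 by omega] at this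
        exact this
      have h2 : df (i+2) * df (j+1) ≤ 3 * df (N-1) := by
        have := dfmul (i+1) j hi1 hj1
        rw [hij, show i+1+1 = i+2 by omega] at this
        exact this
      have hdfN : df N = (2*N-1) * df (N-1) := by
        have h := df_succ (N-1)
        rw [show (N:ℕ)-1+1 = N by omega] at h
        rw [h]
        congr 1
      have hdfpos : 0 < df (j+1) := df_pos _
      have key : ((2*N-1) * (m j * df (i+2))) * df (j+1) ≤ (3 * m (N-1)) * df (j+1) := by
        calc ((2*N-1) * (m j * df (i+2))) * df (j+1)
            = (df (i+2) * df (j+1)) * ((2*N-1) * m j) := by ring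
          _ ≤ (3 * df (N-1)) * ((2*N-1) * m j) := Nat.mul_le_mul_right _ h2
          _ = 3 * (((2*N-1) * df (N-1)) * m j) := by ring
          _ = 3 * (df N * m j) := by rw [← hdfN]
          _ ≤ 3 * (df (j+1) * m (N-1)) := Nat.mul_le_mul_left _ h1
          _ = (3 * m (N-1)) * df (j+1) := by ring
      exact Nat.le_of_mul_le_mul_right key hdfpos
    have hmidsum : (∑ i ∈ range N', m (N-1-(i+1)) * df (i+2)) ≤ 2 * m (N-1) := by
      have hstep : (2*N-1) * (∑ i ∈ range N', m (N-1-(i+1)) * df (i+2))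
          ≤ (2*N-1) * (2 * m (N-1)) := by
        rw [Finset.mul_sum]
        calc ∑ i ∈ range N', (2*N-1) * (m (N-1-(i+1)) * df (i+2))
            ≤ ∑ _i ∈ range N', 3 * m (N-1) :=
              Finset.sum_le_sum fun i hi => hmid i (Finset.mem_range.mp hi)
          _ = N' * (3 * m (N-1)) := by rw [Finset.sum_const, Finset.card_range, smul_eq_mul]
          _ ≤ (2*N-1) * (2 * m (N-1)) := by
              have hco : N' * 3 ≤ (2*N-1) * 2 := by omega
              calc N' * (3 * m (N-1)) = (N' * 3) * m (N-1) := by ring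
                _ ≤ ((2*N-1) * 2) * m (N-1) := Nat.mul_le_mul_right _ hco
                _ = (2*N-1) * (2 * m (N-1)) := by ring
      exact Nat.le_of_mul_le_mul_left hstep (by omega)
    -- decompose
    have hdecomp : ∑ i ∈ range N, m (N-1-i) * df (i+1)
        = m (N-1) * df 1 + (∑ i ∈ range N', m (N-1-(i+1)) * df (i+2))
          + m (N-1-(N-1)) * df (N-1+1) := by
      rw [show (N:ℕ) = (N-1)+1 by omega, Finset.sum_range_succ,
        show (N:ℕ)-1+1-1 = N-1 by omega]
      congr 1
      rw [show (N:ℕ)-1 = N'+1 by omega,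
        Finset.sum_range_succ' (fun i => m (N'+1-i) * df (i+1)) N']
      simp only [Nat.sub_zero]
      rw [add_comm]
    rw [hdecomp, df_one]
    omega
lemma df_decomp (m : ℕ → ℕ) (hm0 : m 0 = 1) (hm : Hm m) (n : ℕ) (hn : 1 ≤ n) :
    df n = m (n-1) + ∑ i ∈ range (n-1), m (n-1-1-i) * df (i+1) := by
  rw [← qdiag m hm0 hm n hn]
  unfold qq
  rw [show n = (n-1)+1 by omega,
    Finset.sum_range_succ' (fun s => m ((n-1)+1-1-s) * df s) (n-1)]
  simp only [Nat.add_sub_cancel, Nat.sub_zero, df_zero, mul_one]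
  rw [add_comm]
  congr 1
  refine Finset.sum_congr rfl fun i hi => ?_
  congr 2
  omega

lemma df_le (m : ℕ → ℕ) (hm0 : m 0 = 1) (hm : Hm m) (n : ℕ) (hn : 3 ≤ n) :
    (2*n-1) * df n ≤ (2*n+4) * m (n-1) := by
  have hq := df_decomp m hm0 hm n (by omega)
  have hTB := TB m hm0 hm (n-1) (by omega)
  have hdfle : df n ≤ m (n-1) + 5 * m (n-2) := by
    rw [hq]
    have : n-1-1 = n-2 := by omega
    rw [this] at hTB ⊢
    omega
  have hL : (2*n-1) * m (n-2) ≤ m (n-1) := by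
    have h := Lrat m hm0 hm (n-2) (by omega)
    rw [show n-2+1 = n-1 by omega] at h
    calc (2*n-1) * m (n-2) = (2*(n-2)+3) * m (n-2) := by congr 1; omega
      _ ≤ m (n-1) := h
  calc (2*n-1) * df n ≤ (2*n-1) * (m (n-1) + 5 * m (n-2)) := Nat.mul_le_mul_left _ hdfle
    _ = (2*n-1) * m (n-1) + 5 * ((2*n-1) * m (n-2)) := by ring
    _ ≤ (2*n-1) * m (n-1) + 5 * m (n-1) := by
        have := Nat.mul_le_mul_left 5 hL
        omega
    _ = (2*n+4) * m (n-1) := by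
        have h1 : 2*n-1+5 = 2*n+4 := by omega
        calc (2*n-1) * m (n-1) + 5 * m (n-1) = (2*n-1+5) * m (n-1) := by ring
          _ = (2*n+4) * m (n-1) := by rw [h1]

lemma m_le_df (m : ℕ → ℕ) (hm0 : m 0 = 1) (hm : Hm m) (n : ℕ) (hn : 1 ≤ n) :
    m n ≤ 2*n * df n := by
  have h2 := (P12 m hm0 hm (n-1)).2
  have h1 := (P12 m hm0 hm (n-1)).1
  rw [show n-1+1 = n by omega] at h1 h2
  rw [← h2]
  calc ∑ j ∈ range n, (2*j+2) * (m j * df (n-1-j))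
      ≤ ∑ j ∈ range n, (2*n) * (m j * df (n-1-j)) := by
        refine Finset.sum_le_sum fun j hj => ?_
        have : j < n := Finset.mem_range.mp hj
        exact Nat.mul_le_mul_right _ (by omega)
    _ = 2*n * ∑ j ∈ range n, m j * df (n-1-j) := by rw [Finset.mul_sum]
    _ = 2*n * df n := by rw [h1]

lemma m_upper (m : ℕ → ℕ) (hm0 : m 0 = 1) (hm : Hm m) (n : ℕ) (hn : 3 ≤ n) :
    m n ≤ (2*n+6) * m (n-1) := by
  have h1 := m_le_df m hm0 hm n (by omega)
  have h2 := df_le m hm0 hm n hn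
  have key : (2*n-1) * m n ≤ (2*n-1) * ((2*n+6) * m (n-1)) := by
    calc (2*n-1) * m n ≤ (2*n-1) * (2*n * df n) := Nat.mul_le_mul_left _ h1
      _ = 2*n * ((2*n-1) * df n) := by ring
      _ ≤ 2*n * ((2*n+4) * m (n-1)) := Nat.mul_le_mul_left _ h2
      _ = (2*n * (2*n+4)) * m (n-1) := by ring
      _ ≤ ((2*n-1) * (2*n+6)) * m (n-1) := by
          refine Nat.mul_le_mul_right _ ?_
          obtain ⟨k, rfl⟩ : ∃ k, n = k+3 := ⟨n-3, by omega⟩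
          have e1 : 2*(k+3)-1 = 2*k+5 := by omega
          rw [e1]
          nlinarith
      _ = (2*n-1) * ((2*n+6) * m (n-1)) := by ring
  exact Nat.le_of_mul_le_mul_left key (by omega)

lemma m_lower (m : ℕ → ℕ) (hm0 : m 0 = 1) (hm : Hm m) (n : ℕ) (hn : 2 ≤ n) :
    (2*n+1) * m (n-1) ≤ m n := by
  have h := Lrat m hm0 hm (n-1) (by omega)
  rw [show n-1+1 = n by omega] at h
  calc (2*n+1) * m (n-1) = (2*(n-1)+3) * m (n-1) := by congr 1; omega
    _ ≤ m n := h

lemma qq_low (m : ℕ → ℕ) (n i : ℕ) (hi : 1 ≤ i) : m (n-1) ≤ qq m n i := by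
  have h := qq_mono m n hi
  rwa [qq_one] at h

lemma qq_high (m : ℕ → ℕ) (hm0 : m 0 = 1) (hm : Hm m) (n i : ℕ) (hn : 1 ≤ n) (hi : i ≤ n) :
    qq m n i ≤ df n := by
  have h := qq_mono m n hi
  rwa [qdiag m hm0 hm n hn] at h

def Hd (m : ℕ → ℕ) (d : ℕ → Polynomial ℝ) : Prop :=
  ∀ n : ℕ, d (n + 1) =
      X ^ 2 * d n + C (2 * (n : ℝ)) * X * d n +
        X * (∑ i ∈ Finset.range (n + 1), C ((m i : ℝ)) * d (n - i)) -
        X ^ 2 * (1 - X) * derivative (d n)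

lemma cXmul (p : Polynomial ℝ) (k : ℕ) : (X * p).coeff (k+1) = p.coeff k :=
  Polynomial.coeff_X_mul p k

lemma cX2mul (p : Polynomial ℝ) (k : ℕ) : (X^2 * p).coeff (k+2) = p.coeff k :=
  Polynomial.coeff_X_pow_mul p 2 k

lemma cX2mul1 (p : Polynomial ℝ) : (X^2 * p).coeff 1 = 0 := by
  rw [sq, mul_assoc]
  have h : (X * (X * p)).coeff (0+1) = (X * p).coeff 0 := cXmul _ 0
  simpa using h

lemma cX2mul0 (p : Polynomial ℝ) : (X^2 * p).coeff 0 = 0 := by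
  rw [Polynomial.mul_coeff_zero]
  simp

lemma cderiv (p : Polynomial ℝ) (k : ℕ) :
    (X^2 * (1 - X) * derivative p).coeff (k+2)
      = (k+1) * p.coeff (k+1) - k * p.coeff k := by
  have hexp : X^2 * (1-X) * derivative p
      = X^2 * derivative p - X^2 * (X * derivative p) := by ring
  rw [hexp, Polynomial.coeff_sub, cX2mul, cX2mul, Polynomial.coeff_derivative]
  cases k with
  | zero =>
    rw [Polynomial.mul_coeff_zero]
    simp
  | succ j =>
    rw [cXmul, Polynomial.coeff_derivative]
    push_cast
    ring

lemma cderiv1 (p : Polynomial ℝ) : (X^2 * (1 - X) * derivative p).coeff 1 = 0 := by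
  have hexp : X^2 * (1-X) * derivative p
      = X^2 * derivative p - X^2 * (X * derivative p) := by ring
  rw [hexp, Polynomial.coeff_sub, cX2mul1, cX2mul1, sub_zero]

lemma cderiv0 (p : Polynomial ℝ) : (X^2 * (1 - X) * derivative p).coeff 0 = 0 := by
  have hexp : X^2 * (1-X) * derivative p
      = X^2 * derivative p - X^2 * (X * derivative p) := by ring
  rw [hexp, Polynomial.coeff_sub, cX2mul0, cX2mul0, sub_zero]

lemma coeffR (m : ℕ → ℕ) (d : ℕ → Polynomial ℝ) (hd : Hd m d) (n k : ℕ) :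
    (d (n+1)).coeff (k+2)
      = (k+1) * (d n).coeff k + ((2*n : ℝ) - (k+1)) * (d n).coeff (k+1)
        + ∑ i ∈ range (n+1), (m i : ℝ) * (d (n-i)).coeff (k+1) := by
  rw [hd n, Polynomial.coeff_sub, Polynomial.coeff_add, Polynomial.coeff_add]
  have h2 : (C (2*(n:ℝ)) * X * d n).coeff (k+2) = 2*(n:ℝ) * (d n).coeff (k+1) := by
    rw [mul_assoc, Polynomial.coeff_C_mul]
    congr 1
    exact cXmul (d n) (k+1)
  have h3 : (X * (∑ i ∈ range (n+1), C ((m i:ℝ)) * d (n-i))).coeff (k+2)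
      = ∑ i ∈ range (n+1), (m i:ℝ) * (d (n-i)).coeff (k+1) := by
    have := cXmul (∑ i ∈ range (n+1), C ((m i:ℝ)) * d (n-i)) (k+1)
    rw [this, Polynomial.finset_sum_coeff]
    exact Finset.sum_congr rfl fun i _ => Polynomial.coeff_C_mul _
  rw [cX2mul, h2, h3, cderiv]
  ring

lemma coeffR1 (m : ℕ → ℕ) (d : ℕ → Polynomial ℝ) (hd : Hd m d) (n : ℕ) :
    (d (n+1)).coeff 1
      = 2*(n:ℝ) * (d n).coeff 0 + ∑ i ∈ range (n+1), (m i : ℝ) * (d (n-i)).coeff 0 := by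
  rw [hd n, Polynomial.coeff_sub, Polynomial.coeff_add, Polynomial.coeff_add]
  have h2 : (C (2*(n:ℝ)) * X * d n).coeff 1 = 2*(n:ℝ) * (d n).coeff 0 := by
    rw [mul_assoc, Polynomial.coeff_C_mul]
    congr 1
    exact cXmul (d n) 0
  have h3 : (X * (∑ i ∈ range (n+1), C ((m i:ℝ)) * d (n-i))).coeff 1
      = ∑ i ∈ range (n+1), (m i:ℝ) * (d (n-i)).coeff 0 := by
    have := cXmul (∑ i ∈ range (n+1), C ((m i:ℝ)) * d (n-i)) 0
    rw [this, Polynomial.finset_sum_coeff]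
    exact Finset.sum_congr rfl fun i _ => Polynomial.coeff_C_mul _
  rw [cX2mul1, h2, h3, cderiv1]
  ring

lemma coeffR0 (m : ℕ → ℕ) (d : ℕ → Polynomial ℝ) (hd : Hd m d) (n : ℕ) :
    (d (n+1)).coeff 0 = 0 := by
  rw [hd n, Polynomial.coeff_sub, Polynomial.coeff_add, Polynomial.coeff_add]
  have h2 : (C (2*(n:ℝ)) * X * d n).coeff 0 = 0 := by
    rw [Polynomial.mul_coeff_zero]
    simp
  have h3 : (X * (∑ i ∈ range (n+1), C ((m i:ℝ)) * d (n-i))).coeff 0 = 0 := by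
    rw [Polynomial.mul_coeff_zero]
    simp
  rw [cX2mul0, h2, h3, cderiv0]
  ring

theorem COEFF (m : ℕ → ℕ) (hm0 : m 0 = 1) (hm : Hm m)
    (d : ℕ → Polynomial ℝ) (hd0 : d 0 = 1) (hd : Hd m d) :
    ∀ N k, (d (N+1)).coeff k =
      (if 1 ≤ k ∧ k ≤ 2*(N+1) then ((qq m (N+1) ((k+1)/2)) : ℝ) else 0) := by
  intro N
  induction N using Nat.strong_induction_on with
  | _ N ih =>
    -- helper: description of d M for M ≤ N
    have hdc : ∀ M, M ≤ N → ∀ j, (d M).coeff j =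
        (if M = 0 then (if j = 0 then (1:ℝ) else 0)
          else if 1 ≤ j ∧ j ≤ 2*M then ((qq m M ((j+1)/2)) : ℝ) else 0) := by
      intro M hM j
      match M with
      | 0 => rw [hd0]; simp [Polynomial.coeff_one]
      | (M'+1) =>
        rw [ih M' (by omega) j]
        simp
    have hzero : ∀ M, M ≤ N → ∀ j, 2*M < j → (d M).coeff j = 0 := by
      intro M hM j hj
      rw [hdc M hM j]
      match M with
      | 0 => simp; omega
      | (M'+1) => simp; intro h1 h2; omega
    have htopc : ∀ M, M ≤ N → (d M).coeff (2*M) = (df M : ℝ) := by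
      intro M hM
      rw [hdc M hM]
      match M with
      | 0 => simp [df_zero]
      | (M'+1) =>
        have hc : 1 ≤ 2*(M'+1) ∧ 2*(M'+1) ≤ 2*(M'+1) := by omega
        simp only [if_pos hc, Nat.succ_ne_zero, if_neg]
        rw [show (2*(M'+1)+1)/2 = M'+1 by omega, qdiag m hm0 hm (M'+1) (by omega)]
        simp
    have hEven : ∀ M, M ≤ N → ∀ a, a ≤ M → 1 ≤ M → (d M).coeff (2*a) = (qq m M a : ℝ) := by
      intro M hM a ha hM1
      rw [hdc M hM]
      rw [if_neg (by omega : ¬ M = 0)]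
      match a with
      | 0 => simp [qq]
      | (a'+1) =>
        rw [if_pos (by omega : 1 ≤ 2*(a'+1) ∧ 2*(a'+1) ≤ 2*M)]
        rw [show (2*(a'+1)+1)/2 = a'+1 by omega]
    have hOdd : ∀ M, M ≤ N → ∀ a, a+1 ≤ M → (d M).coeff (2*a+1) = (qq m M (a+1) : ℝ) := by
      intro M hM a ha
      rw [hdc M hM]
      rw [if_neg (by omega : ¬ M = 0)]
      rw [if_pos (by omega : 1 ≤ 2*a+1 ∧ 2*a+1 ≤ 2*M)]
      rw [show (2*a+1+1)/2 = a+1 by omega]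
    intro k
    match k with
    | 0 =>
      rw [coeffR0 m d hd N]
      rw [if_neg (by omega)]
    | 1 =>
      rw [coeffR1 m d hd N]
      rw [if_pos (by omega : 1 ≤ 1 ∧ 1 ≤ 2*(N+1))]
      have hd0c : ∀ M, M ≤ N → (d M).coeff 0 = (if M = 0 then (1:ℝ) else 0) := by
        intro M hM
        rw [hdc M hM]
        match M with
        | 0 => simp
        | (M'+1) => simp
      have hsum : ∑ i ∈ range (N+1), (m i : ℝ) * (d (N-i)).coeff 0 = (m N : ℝ) := by
        rw [Finset.sum_range_succ]
        have h1 : ∀ i ∈ range N, (m i : ℝ) * (d (N-i)).coeff 0 = 0 := by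
          intro i hi
          have hi' : i < N := Finset.mem_range.mp hi
          rw [hd0c (N-i) (by omega), if_neg (by omega : ¬ N-i = 0), mul_zero]
        rw [Finset.sum_congr rfl h1, Finset.sum_const_zero, zero_add,
          Nat.sub_self, hd0c 0 (by omega), if_pos rfl, mul_one]
      rw [hsum]
      have hq : qq m (N+1) ((1+1)/2) = m N := by
        rw [show (1+1)/2 = 1 by omega, qq_one, show N+1-1 = N by omega]
      rw [hq]
      have hdN0 : (d N).coeff 0 = (if N = 0 then (1:ℝ) else 0) := by
        rw [hdc N (by omega)]
        match N with
        | 0 => simp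
        | (M'+1) => simp
      match N with
      | 0 => rw [hdN0]; norm_num
      | (N'+1) => rw [hdN0, if_neg (by omega : ¬ N'+1 = 0), mul_zero, zero_add]
    | (k'+2) =>
      rw [coeffR m d hd N k']
      by_cases hk : k'+2 ≤ 2*(N+1)
      swap
      · -- out of range: everything vanishes
        rw [if_neg (by omega)]
        have hz1 : (d N).coeff k' = 0 := hzero N (by omega) k' (by omega)
        have hz2 : (d N).coeff (k'+1) = 0 := hzero N (by omega) (k'+1) (by omega)
        have hz3 : ∀ i ∈ range (N+1), (m i : ℝ) * (d (N-i)).coeff (k'+1) = 0 := by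
          intro i hi
          have hi' : i < N+1 := Finset.mem_range.mp hi
          rw [hzero (N-i) (by omega) (k'+1) (by omega), mul_zero]
        rw [hz1, hz2, Finset.sum_congr rfl hz3, Finset.sum_const_zero]
        ring
      · rw [if_pos (by omega : 1 ≤ k'+2 ∧ k'+2 ≤ 2*(N+1))]
        obtain ⟨a, rfl | rfl⟩ : ∃ a, k' = 2*a ∨ k' = 2*a+1 := ⟨k'/2, by omega⟩
        · -- even target 2a+2
          rw [show (2*a+2+1)/2 = a+1 by omega]
          by_cases haN : a = N
          · subst haN
            -- top coefficient case
            have h1 : (d a).coeff (2*a) = (df a : ℝ) := htopc a le_rfl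
            have h2 : (d a).coeff (2*a+1) = 0 := hzero a le_rfl _ (by omega)
            have h3 : ∀ i ∈ range (a+1), (m i : ℝ) * (d (a-i)).coeff (2*a+1) = 0 := by
              intro i hi
              have hi' : i < a+1 := Finset.mem_range.mp hi
              rw [hzero (a-i) (by omega) (2*a+1) (by omega), mul_zero]
            rw [h1, h2, Finset.sum_congr rfl h3, Finset.sum_const_zero]
            rw [qdiag m hm0 hm (a+1) (by omega), df_succ]
            push_cast
            ring
          · -- a < N : use I2 with c = N-a-1
            have haN' : a+1 ≤ N := by omega
            have hI2 := I2 m hm0 hm a (N-a-1)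
            rw [show a+(N-a-1)+2 = N+1 by omega, show a+(N-a-1)+1 = N by omega] at hI2
            -- hI2 : qq m (N+1) (a+1) = (2a+1) qq m N a + (2(N-a-1)+1) qq m N (a+1)
            --        + ∑ i ∈ range (N-a-1+1), m i * qq m (N-i) (a+1)
            have h1 : (d N).coeff (2*a) = (qq m N a : ℝ) := hEven N le_rfl a (by omega) (by omega)
            have h2 : (d N).coeff (2*a+1) = (qq m N (a+1) : ℝ) := hOdd N le_rfl a haN'
            have hsum : ∑ i ∈ range (N+1), (m i : ℝ) * (d (N-i)).coeff (2*a+1)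
                = ∑ i ∈ range (N-a-1+1), (m i : ℝ) * ((qq m (N-i) (a+1) : ℕ) : ℝ) := by
              have hss : range (N-a-1+1) ⊆ range (N+1) := Finset.range_subset_range.2 (by omega)
              have hvanish : ∀ x ∈ range (N+1), x ∉ range (N-a-1+1) →
                  (m x : ℝ) * (d (N-x)).coeff (2*a+1) = 0 := by
                intro x hx hnx
                have hx' : x < N+1 := Finset.mem_range.mp hx
                have hnx' : ¬ x < N-a-1+1 := fun h => hnx (Finset.mem_range.mpr h)
                rw [hzero (N-x) (by omega) (2*a+1) (by omega), mul_zero]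
              rw [← Finset.sum_subset hss hvanish]
              refine Finset.sum_congr rfl fun i hi => ?_
              have hi' : i < N-a-1+1 := Finset.mem_range.mp hi
              rw [hOdd (N-i) (by omega) a (by omega)]
            have hsub : ((N-a-1 : ℕ) : ℝ) = (N:ℝ) - (a:ℝ) - 1 := by
              have e : (N-a-1 : ℕ) = N - (a+1) := by omega
              rw [e, Nat.cast_sub haN']
              push_cast
              ring
            have hR : ((qq m (N+1) (a+1) : ℕ) : ℝ)
                = (2*(a:ℝ)+1) * ((qq m N a : ℕ) : ℝ)
                  + (2*(N:ℝ) - (2*(a:ℝ)+1)) * ((qq m N (a+1) : ℕ) : ℝ)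
                  + ∑ i ∈ range (N-a-1+1), (m i : ℝ) * ((qq m (N-i) (a+1) : ℕ) : ℝ) := by
              rw [hI2]
              push_cast [hsub]
              ring
            rw [h1, h2, hsum, hR]
            push_cast
            ring
        · -- odd target 2a+3
          rw [show (2*a+1+2+1)/2 = a+2 by omega]
          have haN' : a+1 ≤ N := by omega
          have hI1 := I1 m hm0 hm (a+1) (N-a-1) (by omega)
          rw [show (a+1)+(N-a-1) = N by omega] at hI1
          -- hI1 : qq m (N+1) (a+2) = 2*N * qq m N (a+1) + ∑ i ∈ range (N-a-1+1), m i * qq m (N-i) (a+1)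
          have h1 : (d N).coeff (2*a+1) = ((qq m N (a+1) : ℕ) : ℝ) := hOdd N le_rfl a haN'
          have h2 : (d N).coeff (2*a+1+1) = ((qq m N (a+1) : ℕ) : ℝ) := by
            rw [show 2*a+1+1 = 2*(a+1) by omega]
            exact hEven N le_rfl (a+1) haN' (by omega)
          have hsum : ∑ i ∈ range (N+1), (m i : ℝ) * (d (N-i)).coeff (2*a+1+1)
              = ∑ i ∈ range (N-a-1+1), (m i : ℝ) * ((qq m (N-i) (a+1) : ℕ) : ℝ) := by
            have hss : range (N-a-1+1) ⊆ range (N+1) := Finset.range_subset_range.2 (by omega)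
            have hvanish : ∀ x ∈ range (N+1), x ∉ range (N-a-1+1) →
                (m x : ℝ) * (d (N-x)).coeff (2*a+1+1) = 0 := by
              intro x hx hnx
              have hx' : x < N+1 := Finset.mem_range.mp hx
              have hnx' : ¬ x < N-a-1+1 := fun h => hnx (Finset.mem_range.mpr h)
              rw [hzero (N-x) (by omega) (2*a+1+1) (by omega), mul_zero]
            rw [← Finset.sum_subset hss hvanish]
            refine Finset.sum_congr rfl fun i hi => ?_
            have hi' : i < N-a-1+1 := Finset.mem_range.mp hi
            rw [show 2*a+1+1 = 2*(a+1) by omega]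
            rw [hEven (N-i) (by omega) (a+1) (by omega) (by omega)]
          have hR : ((qq m (N+1) (a+2) : ℕ) : ℝ)
              = 2*(N:ℝ) * ((qq m N (a+1) : ℕ) : ℝ)
                + ∑ i ∈ range (N-a-1+1), (m i : ℝ) * ((qq m (N-i) (a+1) : ℕ) : ℝ) := by
            rw [hI1]
            push_cast
            ring
          rw [h1, h2, hsum, hR]
          push_cast
          ring

lemma limB : Tendsto (fun n : ℕ => (n:ℝ)/(2*(n:ℝ)+6)) atTop (nhds (1/2)) := by
  have h0 : Tendsto (fun x:ℝ => (6:ℝ)/x) atTop (nhds 0) :=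
    Filter.Tendsto.div_atTop tendsto_const_nhds tendsto_id
  have h1 : Tendsto (fun x:ℝ => 2 + 6/x) atTop (nhds 2) := by
    simpa using tendsto_const_nhds.add h0
  have h2 : Tendsto (fun x:ℝ => 1/(2 + 6/x)) atTop (nhds (1/2)) :=
    tendsto_const_nhds.div h1 (by norm_num)
  have h3 : Tendsto (fun x:ℝ => x/(2*x+6)) atTop (nhds (1/2)) := by
    refine h2.congr' ?_
    filter_upwards [eventually_ge_atTop (1:ℝ)] with x hx
    have hx0 : x ≠ 0 := by linarith
    have hx6 : 2*x+6 ≠ 0 := by linarith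
    field_simp
  exact h3.comp tendsto_natCast_atTop_atTop

lemma limC : Tendsto (fun n : ℕ => (n:ℝ)*(2*(n:ℝ)+4)/((2*(n:ℝ)-1)*(2*(n:ℝ)+1)))
    atTop (nhds (1/2)) := by
  have h0 : ∀ c : ℝ, Tendsto (fun x:ℝ => c/x) atTop (nhds 0) :=
    fun c => Filter.Tendsto.div_atTop tendsto_const_nhds tendsto_id
  have hnum : Tendsto (fun x:ℝ => 2 + 4/x) atTop (nhds 2) := by
    simpa using tendsto_const_nhds.add (h0 4)
  have a1 : Tendsto (fun x:ℝ => 2 - 1/x) atTop (nhds 2) := by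
    have : Tendsto (fun x:ℝ => (2:ℝ) - 1/x) atTop (nhds (2 - 0)) :=
      tendsto_const_nhds.sub (h0 1)
    rwa [sub_zero] at this
  have a2 : Tendsto (fun x:ℝ => 2 + 1/x) atTop (nhds 2) := by
    have : Tendsto (fun x:ℝ => (2:ℝ) + 1/x) atTop (nhds (2 + 0)) :=
      tendsto_const_nhds.add (h0 1)
    rwa [add_zero] at this
  have hden : Tendsto (fun x:ℝ => (2 - 1/x)*(2 + 1/x)) atTop (nhds ((2:ℝ)*2)) := a1.mul a2
  have h2 : Tendsto (fun x:ℝ => (2 + 4/x)/((2 - 1/x)*(2 + 1/x))) atTop (nhds (1/2)) := by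
    have h := hnum.div hden (by norm_num : (2:ℝ)*2 ≠ 0)
    rw [show (2:ℝ)/(2*2) = 1/2 by norm_num] at h
    exact h
  have h3 : Tendsto (fun x:ℝ => x*(2*x+4)/((2*x-1)*(2*x+1))) atTop (nhds (1/2)) := by
    refine h2.congr' ?_
    filter_upwards [eventually_ge_atTop (1:ℝ)] with x hx
    have hx0 : x ≠ 0 := by linarith
    have hd1 : 2*x-1 ≠ 0 := by nlinarith
    have hd2 : 2*x+1 ≠ 0 := by nlinarith
    field_simp
  exact h3.comp tendsto_natCast_atTop_atTop

theorem main (m : ℕ → ℕ) (hm0 : m 0 = 1) (hm : Hm m)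
    (d : ℕ → Polynomial ℝ) (hd0 : d 0 = 1) (hd : Hd m d)
    (t : ℝ) (ht0 : 0 ≤ t) (ht2 : t ≤ 2) :
    Tendsto (fun n : ℕ =>
        (∑ k ∈ Finset.range (⌊t * n⌋₊ + 1), (d n).coeff k) / (m n : ℝ))
      atTop (nhds (t / 2)) := by
  set F := fun n : ℕ => (∑ k ∈ Finset.range (⌊t * n⌋₊ + 1), (d n).coeff k) / (m n : ℝ) with hF
  set G := fun n : ℕ => (⌊t * (n:ℝ)⌋₊ : ℝ) / (2*(n:ℝ)+6) with hG
  set H := fun n : ℕ => (⌊t * (n:ℝ)⌋₊ : ℝ) * (2*(n:ℝ)+4) / ((2*(n:ℝ)-1)*(2*(n:ℝ)+1)) with hH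
  have hA : Tendsto (fun n : ℕ => (⌊t * (n:ℝ)⌋₊ : ℝ) / (n:ℝ)) atTop (nhds t) :=
    (tendsto_nat_floor_mul_div_atTop ht0).comp tendsto_natCast_atTop_atTop
  have hGlim : Tendsto G atTop (nhds (t/2)) := by
    have hmul := hA.mul limB
    rw [show t * (1/2) = t/2 by ring] at hmul
    refine hmul.congr' ?_
    filter_upwards [eventually_ge_atTop 1] with n hn
    have hn1 : (1:ℝ) ≤ (n:ℝ) := by exact_mod_cast hn
    have hn0 : (n:ℝ) ≠ 0 := by linarith
    have hd6 : 2*(n:ℝ)+6 ≠ 0 := by linarith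
    simp only [hG]
    field_simp
  have hHlim : Tendsto H atTop (nhds (t/2)) := by
    have hmul := hA.mul limC
    rw [show t * (1/2) = t/2 by ring] at hmul
    refine hmul.congr' ?_
    filter_upwards [eventually_ge_atTop 1] with n hn
    have hn1 : (1:ℝ) ≤ (n:ℝ) := by exact_mod_cast hn
    have hn0 : (n:ℝ) ≠ 0 := by linarith
    have hd1 : 2*(n:ℝ)-1 ≠ 0 := by nlinarith
    have hd2 : 2*(n:ℝ)+1 ≠ 0 := by nlinarith
    simp only [hH]
    field_simp
  have hGF : ∀ᶠ n in atTop, G n ≤ F n := by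
    filter_upwards [eventually_ge_atTop 3] with n hn3
    obtain ⟨N, rfl⟩ : ∃ N, n = N + 1 := ⟨n - 1, by omega⟩
    have hj2n : ⌊t * ((N+1:ℕ):ℝ)⌋₊ ≤ 2*(N+1) := by
      have h1 : t * ((N+1:ℕ):ℝ) ≤ 2 * ((N+1:ℕ):ℝ) := by
        have : (0:ℝ) ≤ ((N+1:ℕ):ℝ) := Nat.cast_nonneg _
        nlinarith
      have h2 : ((2*(N+1) : ℕ) : ℝ) = 2 * ((N+1:ℕ):ℝ) := by push_cast; ring
      calc ⌊t * ((N+1:ℕ):ℝ)⌋₊ ≤ ⌊((2*(N+1):ℕ):ℝ)⌋₊ :=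
            Nat.floor_le_floor (by rw [h2]; exact h1)
        _ = 2*(N+1) := Nat.floor_natCast _
    have hmnpos : (0:ℝ) < (m (N+1) : ℝ) := by
      exact_mod_cast mpos m hm0 hm (N+1)
    set j := ⌊t * ((N+1:ℕ):ℝ)⌋₊ with hj
    have hsumlow : (j:ℝ) * (m N : ℝ) ≤ ∑ k ∈ Finset.range (j+1), (d (N+1)).coeff k := by
      rw [Finset.sum_range_succ' (fun k => (d (N+1)).coeff k) j]
      have h0 : (d (N+1)).coeff 0 = 0 := by
        rw [COEFF m hm0 hm d hd0 hd N 0, if_neg (by omega)]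
      rw [h0, add_zero]
      calc (j:ℝ) * (m N : ℝ) = ∑ _i ∈ Finset.range j, (m N : ℝ) := by
            rw [Finset.sum_const, Finset.card_range, nsmul_eq_mul]
        _ ≤ ∑ i ∈ Finset.range j, (d (N+1)).coeff (i+1) := by
            refine Finset.sum_le_sum fun i hi => ?_
            have hij : i < j := Finset.mem_range.mp hi
            rw [COEFF m hm0 hm d hd0 hd N (i+1),
              if_pos (by omega : 1 ≤ i+1 ∧ i+1 ≤ 2*(N+1))]
            have := qq_low m (N+1) ((i+1+1)/2) (by omega)
            rw [show (N:ℕ)+1-1 = N by omega] at this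
            exact_mod_cast this
    have hup : (m (N+1) : ℝ) ≤ (2*((N+1:ℕ):ℝ)+6) * (m N : ℝ) := by
      have h := m_upper m hm0 hm (N+1) (by omega)
      rw [show (N:ℕ)+1-1 = N by omega] at h
      calc (m (N+1) : ℝ) ≤ (((2*(N+1)+6) * m N : ℕ) : ℝ) := by exact_mod_cast h
        _ = (2*((N+1:ℕ):ℝ)+6) * (m N : ℝ) := by push_cast; ring
    show G (N+1) ≤ F (N+1)
    simp only [hG, hF]
    have step1 : (j:ℝ) / (2*((N+1:ℕ):ℝ)+6) ≤ ((j:ℝ) * (m N:ℝ)) / (m (N+1) : ℝ) := by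
      rw [div_le_div_iff₀ (by positivity) hmnpos]
      calc (j:ℝ) * (m (N+1) : ℝ) ≤ (j:ℝ) * ((2*((N+1:ℕ):ℝ)+6) * (m N : ℝ)) := by
            exact mul_le_mul_of_nonneg_left hup (by positivity)
        _ = (j:ℝ) * (m N:ℝ) * (2*((N+1:ℕ):ℝ)+6) := by ring
    exact le_trans step1 ((div_le_div_iff_of_pos_right hmnpos).mpr hsumlow)
  have hFH : ∀ᶠ n in atTop, F n ≤ H n := by
    filter_upwards [eventually_ge_atTop 3] with n hn3
    obtain ⟨N, rfl⟩ : ∃ N, n = N + 1 := ⟨n - 1, by omega⟩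
    have hj2n : ⌊t * ((N+1:ℕ):ℝ)⌋₊ ≤ 2*(N+1) := by
      have h1 : t * ((N+1:ℕ):ℝ) ≤ 2 * ((N+1:ℕ):ℝ) := by
        have : (0:ℝ) ≤ ((N+1:ℕ):ℝ) := Nat.cast_nonneg _
        nlinarith
      have h2 : ((2*(N+1) : ℕ) : ℝ) = 2 * ((N+1:ℕ):ℝ) := by push_cast; ring
      calc ⌊t * ((N+1:ℕ):ℝ)⌋₊ ≤ ⌊((2*(N+1):ℕ):ℝ)⌋₊ :=
            Nat.floor_le_floor (by rw [h2]; exact h1)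
        _ = 2*(N+1) := Nat.floor_natCast _
    have hmnpos : (0:ℝ) < (m (N+1) : ℝ) := by
      exact_mod_cast mpos m hm0 hm (N+1)
    set j := ⌊t * ((N+1:ℕ):ℝ)⌋₊ with hj
    have hsumhigh : ∑ k ∈ Finset.range (j+1), (d (N+1)).coeff k ≤ (j:ℝ) * (df (N+1) : ℝ) := by
      rw [Finset.sum_range_succ' (fun k => (d (N+1)).coeff k) j]
      have h0 : (d (N+1)).coeff 0 = 0 := by
        rw [COEFF m hm0 hm d hd0 hd N 0, if_neg (by omega)]
      rw [h0, add_zero]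
      calc ∑ i ∈ Finset.range j, (d (N+1)).coeff (i+1)
          ≤ ∑ _i ∈ Finset.range j, (df (N+1) : ℝ) := by
            refine Finset.sum_le_sum fun i hi => ?_
            have hij : i < j := Finset.mem_range.mp hi
            rw [COEFF m hm0 hm d hd0 hd N (i+1),
              if_pos (by omega : 1 ≤ i+1 ∧ i+1 ≤ 2*(N+1))]
            exact_mod_cast qq_high m hm0 hm (N+1) ((i+1+1)/2) (by omega) (by omega)
        _ = (j:ℝ) * (df (N+1) : ℝ) := by
            rw [Finset.sum_const, Finset.card_range, nsmul_eq_mul]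
    have hK : (2*(N+1)-1)*(2*(N+1)+1) * df (N+1) ≤ (2*(N+1)+4) * m (N+1) := by
      have h1 := df_le m hm0 hm (N+1) (by omega)
      have h2 := m_lower m hm0 hm (N+1) (by omega)
      rw [show (N:ℕ)+1-1 = N by omega] at h1 h2
      calc (2*(N+1)-1)*(2*(N+1)+1) * df (N+1)
          = (2*(N+1)+1) * ((2*(N+1)-1) * df (N+1)) := by ring
        _ ≤ (2*(N+1)+1) * ((2*(N+1)+4) * m N) := Nat.mul_le_mul_left _ h1
        _ = (2*(N+1)+4) * ((2*(N+1)+1) * m N) := by ring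
        _ ≤ (2*(N+1)+4) * m (N+1) := Nat.mul_le_mul_left _ h2
    have hKR : (2*((N+1:ℕ):ℝ)-1)*(2*((N+1:ℕ):ℝ)+1) * (df (N+1) : ℝ)
        ≤ (2*((N+1:ℕ):ℝ)+4) * (m (N+1) : ℝ) := by
      have hcast : ((2*(N+1)-1 : ℕ) : ℝ) = 2*((N+1:ℕ):ℝ)-1 := by
        have e : (2*(N+1)-1 : ℕ) = 2*N+1 := by omega
        rw [e]
        push_cast
        ring
      calc (2*((N+1:ℕ):ℝ)-1)*(2*((N+1:ℕ):ℝ)+1) * (df (N+1) : ℝ)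
          = (((2*(N+1)-1)*(2*(N+1)+1) * df (N+1) : ℕ) : ℝ) := by
            push_cast [hcast]
            ring
        _ ≤ (((2*(N+1)+4) * m (N+1) : ℕ) : ℝ) := by exact_mod_cast hK
        _ = (2*((N+1:ℕ):ℝ)+4) * (m (N+1) : ℝ) := by push_cast; ring
    show F (N+1) ≤ H (N+1)
    simp only [hF, hH]
    have hn1 : (1:ℝ) ≤ ((N+1:ℕ):ℝ) := by exact_mod_cast Nat.one_le_iff_ne_zero.mpr (by omega)
    have hden : (0:ℝ) < (2*((N+1:ℕ):ℝ)-1)*(2*((N+1:ℕ):ℝ)+1) := by nlinarith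
    have step1 : (∑ k ∈ Finset.range (j+1), (d (N+1)).coeff k) / (m (N+1) : ℝ)
        ≤ ((j:ℝ) * (df (N+1) : ℝ)) / (m (N+1) : ℝ) := (div_le_div_iff_of_pos_right hmnpos).mpr hsumhigh
    refine le_trans step1 ?_
    rw [div_le_div_iff₀ hmnpos hden]
    calc (j:ℝ) * (df (N+1):ℝ) * ((2*((N+1:ℕ):ℝ)-1)*(2*((N+1:ℕ):ℝ)+1))
        = (j:ℝ) * ((2*((N+1:ℕ):ℝ)-1)*(2*((N+1:ℕ):ℝ)+1) * (df (N+1) : ℝ)) := by ring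
      _ ≤ (j:ℝ) * ((2*((N+1:ℕ):ℝ)+4) * (m (N+1) : ℝ)) := by
          exact mul_le_mul_of_nonneg_left hKR (by positivity)
      _ = (j:ℝ) * (2*((N+1:ℕ):ℝ)+4) * (m (N+1) : ℝ) := by ring
  exact tendsto_of_tendsto_of_tendsto_of_le_of_le' hGlim hHlim hGF hFH

end RDUL

open Polynomial Filter

/-- The root vertex degree `D_n` of a uniform random rooted map with
`n` edges, rescaled by `n`, converges in distribution to the uniform law on `[0,2]`:
for every `t ∈ [0,2]`, `lim_{n→∞} (Σ_{k=0}^{⌊tn⌋} d_{n,k}) / m(n) = t/2`. -/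
theorem root_degree_uniform_law
    (m : ℕ → ℕ) (hm0 : m 0 = 1)
    (hm : ∀ n : ℕ, m (n + 1) =
      (∑ k ∈ Finset.range (n + 1), m k * m (n - k)) + (2 * (n + 1) - 1) * m n)
    (d : ℕ → Polynomial ℝ) (hd0 : d 0 = 1)
    (hd : ∀ n : ℕ, d (n + 1) =
      X ^ 2 * d n + C (2 * (n : ℝ)) * X * d n +
        X * (∑ i ∈ Finset.range (n + 1), C ((m i : ℝ)) * d (n - i)) -
        X ^ 2 * (1 - X) * derivative (d n)) :
    ∀ t : ℝ, 0 ≤ t → t ≤ 2 →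
      Tendsto
        (fun n : ℕ =>
          (∑ k ∈ Finset.range (⌊t * n⌋₊ + 1), (d n).coeff k) / (m n : ℝ))
        atTop (nhds (t / 2)) := by
  intro t ht0 ht2
  exact RDUL.main m hm0 hm d hd0 hd t ht0 ht2
end
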